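/- arXiv:1404.0153 — 5 statements merged into one kernel-verified Lean document; each statement's English description precedes it below -/
import Mathlib

section
/- Let C = (C(k))_{k≥0} be a double complex of real vector spaces. Suppose that for every q ∈ ℤ the sequence 0 → H_q(C(0)) → H_q(C(1)) → H_q(C(2)) → ⋯, with maps H_q(δ_k), is exact (that is, H_q(δ₁) is injective and ker H_q(δ_{k+1}) = im H_q(δ_k) for every k ≥ 1). Then the total complex C̃ is acyclic: H_n(C̃) = 0 for every n ∈ ℤ. -/
/-- A double complex of real vector spaces: chain complexes `C(k)` (`k ≥ 0`) with graded
pieces `X k p` (`p : ℤ`), differentials recorded as families `d k p q : X k p →ₗ X k q`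
vanishing unless `q = p - 1`, and anti-chain maps `δ k : C(k) → C(k+1)` of degree `0`,
recorded as families `δ k p r : X k p →ₗ X (k+1) r` vanishing unless `r = p`, with
`δ∘δ = 0`.  (So `δ (k-1)` here is the map written `δ_k : C(k-1) → C(k)` in the paper.) -/
structure DoubleComplex : Type 1 where
  X : ℕ → ℤ → Type
  [instAddCommGroup : ∀ k p, AddCommGroup (X k p)]
  [instModule : ∀ k p, Module ℝ (X k p)]
  d : ∀ (k : ℕ) (p q : ℤ), X k p →ₗ[ℝ] X k q
  d_support : ∀ (k : ℕ) (p q : ℤ) (x : X k p), q ≠ p - 1 → d k p q x = 0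
  d_sq : ∀ (k : ℕ) (p q r : ℤ) (x : X k p), d k q r (d k p q x) = 0
  δ : ∀ (k : ℕ) (p r : ℤ), X k p →ₗ[ℝ] X (k + 1) r
  δ_support : ∀ (k : ℕ) (p r : ℤ) (x : X k p), r ≠ p → δ k p r x = 0
  δ_anti : ∀ (k : ℕ) (p r : ℤ) (x : X k p),
    δ k (p - 1) (r - 1) (d k p (p - 1) x) = - d (k + 1) r (r - 1) (δ k p r x)
  δ_sq : ∀ (k : ℕ) (p r s : ℤ) (x : X k p), δ (k + 1) r s (δ k p r x) = 0

attribute [instance] DoubleComplex.instAddCommGroup DoubleComplex.instModule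

namespace DoubleComplex

/-- `x` is a cycle of `C(k)` in degree `q`. -/
def IsCycle (C : DoubleComplex) (k : ℕ) (q : ℤ) (x : C.X k q) : Prop :=
  C.d k q (q - 1) x = 0

/-- `x` is a boundary of `C(k)` in degree `q`. -/
def IsBoundary (C : DoubleComplex) (k : ℕ) (q : ℤ) (x : C.X k q) : Prop :=
  ∃ y : C.X k (q + 1), C.d k (q + 1) q y = x

/-- The total complex `C̃_n = ∏_{k ≥ 0} C(k)_{n+k}`. -/
def Tot (C : DoubleComplex) (n : ℤ) : Type := ∀ k : ℕ, C.X k (n + (k : ℤ))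

instance (C : DoubleComplex) (n : ℤ) : AddCommGroup (C.Tot n) :=
  inferInstanceAs (AddCommGroup (∀ k : ℕ, C.X k (n + (k : ℤ))))

instance (C : DoubleComplex) (n : ℤ) : Module ℝ (C.Tot n) :=
  inferInstanceAs (Module ℝ (∀ k : ℕ, C.X k (n + (k : ℤ))))

/-- The total differential `(∂̃ x)_k = ∂ x_k + δ_k (x_{k-1})`. -/
def totD (C : DoubleComplex) (n m : ℤ) (x : C.Tot n) : C.Tot m := fun k =>
  C.d k (n + (k : ℤ)) (m + (k : ℤ)) (x k) +
    (match k with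
      | 0 => 0
      | (j + 1) => C.δ j (n + (j : ℤ)) (m + ((j + 1 : ℕ) : ℤ)) (x j))

end DoubleComplex

namespace DoubleComplex

/-- Transport along an equality of degrees. -/
def cst (C : DoubleComplex) {k : ℕ} {p p' : ℤ} (h : p = p') (v : C.X k p) : C.X k p' :=
  h ▸ v

lemma cst_d (C : DoubleComplex) {k : ℕ} {p q q' : ℤ} (h : q = q') (v : C.X k p) :
    C.cst h (C.d k p q v) = C.d k p q' v := by subst h; rfl

lemma cst_δ (C : DoubleComplex) {k : ℕ} {p r r' : ℤ} (h : r = r') (v : C.X k p) :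
    C.cst h (C.δ k p r v) = C.δ k p r' v := by subst h; rfl

lemma d_cst (C : DoubleComplex) {k : ℕ} {p p' q : ℤ} (h : p = p') (v : C.X k p) :
    C.d k p' q (C.cst h v) = C.d k p q v := by subst h; rfl

lemma δ_cst (C : DoubleComplex) {k : ℕ} {p p' r : ℤ} (h : p = p') (v : C.X k p) :
    C.δ k p' r (C.cst h v) = C.δ k p r v := by subst h; rfl

lemma cst_neg (C : DoubleComplex) {k : ℕ} {p p' : ℤ} (h : p = p') (v : C.X k p) :
    C.cst h (-v) = -(C.cst h v) := by subst h; rfl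

lemma cst_sub (C : DoubleComplex) {k : ℕ} {p p' : ℤ} (h : p = p') (v w : C.X k p) :
    C.cst h (v - w) = C.cst h v - C.cst h w := by subst h; rfl

lemma cst_zero (C : DoubleComplex) {k : ℕ} {p p' : ℤ} (h : p = p') :
    C.cst h (0 : C.X k p) = 0 := by subst h; rfl

lemma cst_eq_zero (C : DoubleComplex) {k : ℕ} {p p' : ℤ} (h : p = p') {v : C.X k p} :
    C.cst h v = 0 ↔ v = 0 := by subst h; exact Iff.rfl

end DoubleComplex

/-- Lemma 6.1.  If for every degree `q` the sequence
`0 → H_q(C(0)) → H_q(C(1)) → ⋯` induced by the maps `δ` is exact — i.e.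
`H_q(δ₁)` is injective and `ker H_q(δ_{k+1}) = im H_q(δ_k)` for every `k ≥ 1` —
then the total complex `C̃` is acyclic: every cycle of `C̃` is a boundary. -/
theorem DoubleComplex.total_acyclic_of_exact (C : DoubleComplex)
    (hinj : ∀ (q : ℤ) (x : C.X 0 q), C.IsCycle 0 q x →
      C.IsBoundary 1 q (C.δ 0 q q x) → C.IsBoundary 0 q x)
    (hexact : ∀ (j : ℕ) (q : ℤ) (x : C.X (j + 1) q), C.IsCycle (j + 1) q x →
      (C.IsBoundary (j + 2) q (C.δ (j + 1) q q x) ↔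
        ∃ y : C.X j q, C.IsCycle j q y ∧ C.IsBoundary (j + 1) q (x - C.δ j q q y))) :
    ∀ (n : ℤ) (x : C.Tot n), C.totD n (n - 1) x = 0 →
      ∃ y : C.Tot (n + 1), C.totD (n + 1) n y = x := by
  intro n x hx
  -- components of the cycle condition
  have h0 : C.d 0 (n + ((0:ℕ):ℤ)) (n - 1 + ((0:ℕ):ℤ)) (x 0) + 0 = 0 := congrFun hx 0
  have hk : ∀ j : ℕ,
      C.d (j+1) (n + ((j+1:ℕ):ℤ)) (n - 1 + ((j+1:ℕ):ℤ)) (x (j+1))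
        + C.δ j (n + (j:ℤ)) (n - 1 + ((j+1:ℕ):ℤ)) (x j) = 0 := fun j => congrFun hx (j+1)
  -- `δ x_{k+1}` (at target degree `n+(k+1)`) is minus a boundary
  have hδx : ∀ j : ℕ,
      C.δ j (n + (j:ℤ)) (n + (j:ℤ)) (x j)
        = - C.d (j+1) (n + ((j+1:ℕ):ℤ)) (n + (j:ℤ)) (x (j+1)) := by
    intro j
    have h1 : C.δ j (n + (j:ℤ)) (n - 1 + ((j+1:ℕ):ℤ)) (x j)
        = - C.d (j+1) (n + ((j+1:ℕ):ℤ)) (n - 1 + ((j+1:ℕ):ℤ)) (x (j+1)) :=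
      eq_neg_of_add_eq_zero_right (hk j)
    have h2 : (n - 1 + ((j+1:ℕ):ℤ)) = n + (j:ℤ) := by push_cast; ring
    calc C.δ j (n + (j:ℤ)) (n + (j:ℤ)) (x j)
        = C.cst h2 (C.δ j (n + (j:ℤ)) (n - 1 + ((j+1:ℕ):ℤ)) (x j)) := (C.cst_δ h2 _).symm
      _ = C.cst h2 (- C.d (j+1) (n + ((j+1:ℕ):ℤ)) (n - 1 + ((j+1:ℕ):ℤ)) (x (j+1))) := by
          rw [h1]
      _ = - C.d (j+1) (n + ((j+1:ℕ):ℤ)) (n + (j:ℤ)) (x (j+1)) := by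
          rw [C.cst_neg, C.cst_d]
  -- the key correction lemma (exactness at `C(k+1)`)
  have corr : ∀ (k : ℕ) (y : C.X k (n + 1 + (k:ℤ))),
      C.δ k (n + (k:ℤ)) (n + ((k+1:ℕ):ℤ) - 1) (C.d k (n + 1 + (k:ℤ)) (n + (k:ℤ)) y)
        = C.δ k (n + (k:ℤ)) (n + ((k+1:ℕ):ℤ) - 1) (x k) →
      ∃ w : C.X k (n + 1 + (k:ℤ)), C.d k (n + 1 + (k:ℤ)) (n + (k:ℤ)) w = 0 ∧
        ∃ v : C.X (k+1) (n + 1 + ((k+1:ℕ):ℤ)),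
          C.d (k+1) (n + 1 + ((k+1:ℕ):ℤ)) (n + ((k+1:ℕ):ℤ)) v
            = x (k+1) - C.δ k (n + 1 + (k:ℤ)) (n + ((k+1:ℕ):ℤ)) (y + w) := by
    intro k y hδd
    have h2 : n - 1 + ((k+1:ℕ):ℤ) = n + ((k+1:ℕ):ℤ) - 1 := by push_cast; ring
    have h3 : n + (k:ℤ) = n + 1 + (k:ℤ) - 1 := by ring
    have h5 : n + ((k+1:ℕ):ℤ) = n + 1 + (k:ℤ) := by push_cast; ring
    have h6 : n + ((k+1:ℕ):ℤ) - 1 = n + (k:ℤ) := by push_cast; ring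
    have h7 : n + ((k+1:ℕ):ℤ) + 1 = n + 1 + ((k+1:ℕ):ℤ) := by ring
    -- the corrected cycle `z = x (k+1) - δ y` is a cycle of `C(k+1)`
    have zcyc : C.IsCycle (k+1) (n + ((k+1:ℕ):ℤ))
        (x (k+1) - C.δ k (n + 1 + (k:ℤ)) (n + ((k+1:ℕ):ℤ)) y) := by
      show C.d (k+1) (n + ((k+1:ℕ):ℤ)) (n + ((k+1:ℕ):ℤ) - 1) _ = 0
      rw [map_sub]
      have ea : C.d (k+1) (n + ((k+1:ℕ):ℤ)) (n + ((k+1:ℕ):ℤ) - 1) (x (k+1))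
          = - C.δ k (n + (k:ℤ)) (n + ((k+1:ℕ):ℤ) - 1) (x k) := by
        have e1 : C.d (k+1) (n + ((k+1:ℕ):ℤ)) (n - 1 + ((k+1:ℕ):ℤ)) (x (k+1))
            = - C.δ k (n + (k:ℤ)) (n - 1 + ((k+1:ℕ):ℤ)) (x k) :=
          eq_neg_of_add_eq_zero_left (hk k)
        calc C.d (k+1) (n + ((k+1:ℕ):ℤ)) (n + ((k+1:ℕ):ℤ) - 1) (x (k+1))
            = C.cst h2 (C.d (k+1) (n + ((k+1:ℕ):ℤ)) (n - 1 + ((k+1:ℕ):ℤ)) (x (k+1))) :=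
              (C.cst_d h2 _).symm
          _ = _ := by rw [e1, C.cst_neg, C.cst_δ]
      have eb : C.d (k+1) (n + ((k+1:ℕ):ℤ)) (n + ((k+1:ℕ):ℤ) - 1)
            (C.δ k (n + 1 + (k:ℤ)) (n + ((k+1:ℕ):ℤ)) y)
          = - C.δ k (n + (k:ℤ)) (n + ((k+1:ℕ):ℤ) - 1) (x k) := by
        have e2 := C.δ_anti k (n + 1 + (k:ℤ)) (n + ((k+1:ℕ):ℤ)) y
        rw [← C.cst_d h3 y, C.δ_cst h3, hδd] at e2
        exact neg_eq_iff_eq_neg.mp e2.symm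
      rw [ea, eb]
      abel
    -- `δ z = δ x_{k+1}` is a boundary of `C(k+2)`
    have zbd : C.IsBoundary (k+2) (n + ((k+1:ℕ):ℤ))
        (C.δ (k+1) (n + ((k+1:ℕ):ℤ)) (n + ((k+1:ℕ):ℤ))
          (x (k+1) - C.δ k (n + 1 + (k:ℤ)) (n + ((k+1:ℕ):ℤ)) y)) := by
      have h4 : n + ((k+1+1:ℕ):ℤ) = n + ((k+1:ℕ):ℤ) + 1 := by push_cast; ring
      refine ⟨C.cst h4 (-(x (k+1+1))), ?_⟩
      rw [C.d_cst h4, map_neg, map_sub, C.δ_sq, sub_zero, hδx (k+1)]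
    obtain ⟨w', hw'cyc, hw'bd⟩ := (hexact k (n + ((k+1:ℕ):ℤ)) _ zcyc).mp zbd
    refine ⟨C.cst h5 w', ?_, ?_⟩
    · rw [C.d_cst h5, ← C.cst_d h6 w']
      have : C.d k (n + ((k+1:ℕ):ℤ)) (n + ((k+1:ℕ):ℤ) - 1) w' = 0 := hw'cyc
      rw [this, C.cst_zero]
    · obtain ⟨v', hv'⟩ := hw'bd
      refine ⟨C.cst h7 v', ?_⟩
      rw [C.d_cst h7, hv', map_add, C.δ_cst h5]
      abel
  -- base: a preimage of `x 0` satisfying the invariant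
  have base : ∃ y0 : C.X 0 (n + 1 + ((0:ℕ):ℤ)),
      C.d 0 (n + 1 + ((0:ℕ):ℤ)) (n + ((0:ℕ):ℤ)) y0 = x 0 ∧
      ∃ v : C.X 1 (n + 1 + ((1:ℕ):ℤ)),
        C.d 1 (n + 1 + ((1:ℕ):ℤ)) (n + ((1:ℕ):ℤ)) v
          = x 1 - C.δ 0 (n + 1 + ((0:ℕ):ℤ)) (n + ((1:ℕ):ℤ)) y0 := by
    have h9 : n - 1 + ((0:ℕ):ℤ) = n + ((0:ℕ):ℤ) - 1 := by push_cast; ring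
    have h8 : n + ((0:ℕ):ℤ) + 1 = n + 1 + ((0:ℕ):ℤ) := by ring
    have x0cyc : C.IsCycle 0 (n + ((0:ℕ):ℤ)) (x 0) := by
      show C.d 0 (n + ((0:ℕ):ℤ)) (n + ((0:ℕ):ℤ) - 1) (x 0) = 0
      have e0 : C.d 0 (n + ((0:ℕ):ℤ)) (n - 1 + ((0:ℕ):ℤ)) (x 0) = 0 := by
        have := h0; rwa [add_zero] at this
      rw [← C.cst_d h9 (x 0), e0, C.cst_zero]
    have δ0bd : C.IsBoundary 1 (n + ((0:ℕ):ℤ))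
        (C.δ 0 (n + ((0:ℕ):ℤ)) (n + ((0:ℕ):ℤ)) (x 0)) := by
      have h4 : n + ((0+1:ℕ):ℤ) = n + ((0:ℕ):ℤ) + 1 := by push_cast; ring
      refine ⟨C.cst h4 (-(x (0+1))), ?_⟩
      rw [C.d_cst h4, map_neg, hδx 0]
    obtain ⟨u', hu'⟩ := hinj (n + ((0:ℕ):ℤ)) (x 0) x0cyc δ0bd
    have hu : C.d 0 (n + 1 + ((0:ℕ):ℤ)) (n + ((0:ℕ):ℤ)) (C.cst h8 u') = x 0 := by
      rw [C.d_cst h8]; exact hu'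
    have hδd0 : C.δ 0 (n + ((0:ℕ):ℤ)) (n + ((0+1:ℕ):ℤ) - 1)
          (C.d 0 (n + 1 + ((0:ℕ):ℤ)) (n + ((0:ℕ):ℤ)) (C.cst h8 u'))
        = C.δ 0 (n + ((0:ℕ):ℤ)) (n + ((0+1:ℕ):ℤ) - 1) (x 0) := by rw [hu]
    obtain ⟨w, hw0, v, hv⟩ := corr 0 (C.cst h8 u') hδd0
    exact ⟨C.cst h8 u' + w, by rw [map_add, hu, hw0, add_zero], v, hv⟩
  -- step
  have stepex : ∀ (k : ℕ) (yk : C.X k (n + 1 + (k:ℤ))),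
      (∃ w : C.X (k+1) (n + 1 + ((k+1:ℕ):ℤ)),
        C.d (k+1) (n + 1 + ((k+1:ℕ):ℤ)) (n + ((k+1:ℕ):ℤ)) w
          = x (k+1) - C.δ k (n + 1 + (k:ℤ)) (n + ((k+1:ℕ):ℤ)) yk) →
      ∃ y' : C.X (k+1) (n + 1 + ((k+1:ℕ):ℤ)),
        (C.d (k+1) (n + 1 + ((k+1:ℕ):ℤ)) (n + ((k+1:ℕ):ℤ)) y'
          + C.δ k (n + 1 + (k:ℤ)) (n + ((k+1:ℕ):ℤ)) yk = x (k+1)) ∧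
        ∃ v : C.X (k+2) (n + 1 + ((k+2:ℕ):ℤ)),
          C.d (k+2) (n + 1 + ((k+2:ℕ):ℤ)) (n + ((k+2:ℕ):ℤ)) v
            = x (k+2) - C.δ (k+1) (n + 1 + ((k+1:ℕ):ℤ)) (n + ((k+2:ℕ):ℤ)) y' := by
    intro k y0 hBd
    obtain ⟨u, hu⟩ := hBd
    have hδd : C.δ (k+1) (n + ((k+1:ℕ):ℤ)) (n + ((k+1+1:ℕ):ℤ) - 1)
          (C.d (k+1) (n + 1 + ((k+1:ℕ):ℤ)) (n + ((k+1:ℕ):ℤ)) u)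
        = C.δ (k+1) (n + ((k+1:ℕ):ℤ)) (n + ((k+1+1:ℕ):ℤ) - 1) (x (k+1)) := by
      rw [hu, map_sub, C.δ_sq, sub_zero]
    obtain ⟨w, hw0, v, hv⟩ := corr (k+1) u hδd
    refine ⟨u + w, ?_, ⟨v, hv⟩⟩
    rw [map_add, hu, hw0]
    abel
  -- recursive construction
  let F : ∀ k : ℕ, {y : C.X k (n + 1 + (k:ℤ)) //
      ∃ v : C.X (k+1) (n + 1 + ((k+1:ℕ):ℤ)),
        C.d (k+1) (n + 1 + ((k+1:ℕ):ℤ)) (n + ((k+1:ℕ):ℤ)) v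
          = x (k+1) - C.δ k (n + 1 + (k:ℤ)) (n + ((k+1:ℕ):ℤ)) y} := fun k =>
    Nat.rec ⟨base.choose, base.choose_spec.2⟩
      (fun j ih => ⟨(stepex j ih.1 ih.2).choose, (stepex j ih.1 ih.2).choose_spec.2⟩) k
  refine ⟨fun k => (F k).1, ?_⟩
  funext k
  cases k with
  | zero =>
    show C.d 0 (n + 1 + ((0:ℕ):ℤ)) (n + ((0:ℕ):ℤ)) (F 0).1 + 0 = x 0
    rw [add_zero]
    exact base.choose_spec.1
  | succ j =>
    show C.d (j+1) (n + 1 + ((j+1:ℕ):ℤ)) (n + ((j+1:ℕ):ℤ)) (F (j+1)).1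
        + C.δ j (n + 1 + (j:ℤ)) (n + ((j+1:ℕ):ℤ)) (F j).1 = x (j+1)
    exact (stepex j (F j).1 (F j).2).choose_spec.1
end

section
/- Let φ : C → D be a morphism of double complexes of real vector spaces. If φ(k) : C(k)_* → D(k)_* is a quasi-isomorphism for every k ≥ 0, then the induced chain map on total complexes φ̃ : C̃ → D̃, (x_k)_{k≥0} ↦ (φ(k)(x_k))_{k≥0}, is a quasi-isomorphism. -/
/-- The chain map `C̃ → D̃` on total complexes induced by a morphism of double
complexes, `(x_k)_k ↦ (f k (x_k))_k`. -/
def DoubleComplex.totMap (C D : DoubleComplex)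
    (f : ∀ (k : ℕ) (p : ℤ), C.X k p →ₗ[ℝ] D.X k p) (n : ℤ) (x : C.Tot n) : D.Tot n :=
  fun k => f k (n + (k : ℤ)) (x k)


namespace DoubleComplex

private lemma exists_seq' {S : ℕ → Type} (R : ∀ k, S k → S (k+1) → Prop)
    (s0 : S 0) (hstep : ∀ k (s : S k), ∃ s', R k s s') :
    ∃ g : ∀ k, S k, g 0 = s0 ∧ ∀ k, R k (g k) (g (k+1)) :=
  ⟨fun k => Nat.rec s0 (fun k sk => (hstep k sk).choose) k, rfl,
    fun k => (hstep k _).choose_spec⟩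

private lemma anti' (C : DoubleComplex) (k : ℕ) (p q r s : ℤ)
    (hq : q = p - 1) (hs : s = r - 1) (x : C.X k p) :
    C.d (k+1) r s (C.δ k p r x) = - C.δ k q s (C.d k p q x) := by
  subst hq hs
  rw [C.δ_anti k p r x, neg_neg]

private lemma key (C D : DoubleComplex)
    (f : ∀ (k : ℕ) (p : ℤ), C.X k p →ₗ[ℝ] D.X k p)
    (hf_chain : ∀ (k : ℕ) (p q : ℤ) (x : C.X k p),
      f k q (C.d k p q x) = D.d k p q (f k p x))
    (hqis_inj : ∀ (k : ℕ) (q : ℤ) (x : C.X k q), C.IsCycle k q x →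
      D.IsBoundary k q (f k q x) → C.IsBoundary k q x)
    (hqis_surj : ∀ (k : ℕ) (q : ℤ) (y : D.X k q), D.IsCycle k q y →
      ∃ x : C.X k q, C.IsCycle k q x ∧ D.IsBoundary k q (y - f k q x))
    (k : ℕ) (q q' q'' q₀ : ℤ) (hq' : q' = q + 1) (hq'' : q'' = q' + 1) (hq₀ : q₀ = q - 1)
    (u : C.X k q) (t : D.X k q')
    (hu : C.d k q q₀ u = 0) (ht : D.d k q' q t = f k q u) :
    ∃ (y : C.X k q') (v : D.X k q''),
      C.d k q' q y = u ∧ D.d k q'' q' v = t - f k q' y := by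
  subst hq' hq'' hq₀
  obtain ⟨a, ha⟩ := hqis_inj k q u hu ⟨t, ht⟩
  have hcyc : D.IsCycle k (q+1) (t - f k (q+1) a) := by
    unfold DoubleComplex.IsCycle
    rw [add_sub_cancel_right, map_sub, ht, ← hf_chain, ha, sub_self]
  obtain ⟨c, hc, vv, hv⟩ := hqis_surj k (q+1) (t - f k (q+1) a) hcyc
  refine ⟨a + c, vv, ?_, ?_⟩
  · have hc' : C.d k (q+1) q c = 0 := by
      have h2 := hc
      unfold DoubleComplex.IsCycle at h2
      rwa [add_sub_cancel_right] at h2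
    rw [map_add, ha, hc', add_zero]
  · rw [hv, map_add]; abel

end DoubleComplex

/-- Lemma 6.2.  If a morphism `φ : C → D` of double complexes is a
quasi-isomorphism in every column (`φ(k) : C(k) → D(k)` induces isomorphisms on
homology in every degree), then the induced chain map `φ̃ : C̃ → D̃` of total
complexes is a quasi-isomorphism (injective and surjective on homology in every
degree). -/
theorem DoubleComplex.totMap_quasiIso (C D : DoubleComplex)
    (f : ∀ (k : ℕ) (p : ℤ), C.X k p →ₗ[ℝ] D.X k p)
    (hf_chain : ∀ (k : ℕ) (p q : ℤ) (x : C.X k p),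
      f k q (C.d k p q x) = D.d k p q (f k p x))
    (hf_δ : ∀ (k : ℕ) (p r : ℤ) (x : C.X k p),
      f (k + 1) r (C.δ k p r x) = D.δ k p r (f k p x))
    (hqis_inj : ∀ (k : ℕ) (q : ℤ) (x : C.X k q), C.IsCycle k q x →
      D.IsBoundary k q (f k q x) → C.IsBoundary k q x)
    (hqis_surj : ∀ (k : ℕ) (q : ℤ) (y : D.X k q), D.IsCycle k q y →
      ∃ x : C.X k q, C.IsCycle k q x ∧ D.IsBoundary k q (y - f k q x)) :
    ∀ n : ℤ,
      (∀ x : C.Tot n, C.totD n (n - 1) x = 0 →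
        (∃ w : D.Tot (n + 1), D.totD (n + 1) n w = DoubleComplex.totMap C D f n x) →
        ∃ y : C.Tot (n + 1), C.totD (n + 1) n y = x) ∧
      (∀ z : D.Tot n, D.totD n (n - 1) z = 0 →
        ∃ x : C.Tot n, C.totD n (n - 1) x = 0 ∧
          ∃ w : D.Tot (n + 1),
            D.totD (n + 1) n w = z - DoubleComplex.totMap C D f n x) := by
  intro n
  constructor
  · -- injectivity on homology
    rintro x hx ⟨w, hw⟩
    have hx0 : C.d 0 (n + ((0:ℕ):ℤ)) ((n-1) + ((0:ℕ):ℤ)) (x 0) + 0 = 0 := congrFun hx 0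
    have hxc : ∀ j : ℕ,
        C.d (j+1) (n + ((j+1:ℕ):ℤ)) ((n-1) + ((j+1:ℕ):ℤ)) (x (j+1))
          + C.δ j (n + (j:ℤ)) ((n-1) + ((j+1:ℕ):ℤ)) (x j) = 0 :=
      fun j => congrFun hx (j+1)
    have hw0 : D.d 0 ((n+1) + ((0:ℕ):ℤ)) (n + ((0:ℕ):ℤ)) (w 0) + 0
        = f 0 (n + ((0:ℕ):ℤ)) (x 0) := congrFun hw 0
    have hwc : ∀ j : ℕ,
        D.d (j+1) ((n+1) + ((j+1:ℕ):ℤ)) (n + ((j+1:ℕ):ℤ)) (w (j+1))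
          + D.δ j ((n+1) + (j:ℤ)) (n + ((j+1:ℕ):ℤ)) (w j)
        = f (j+1) (n + ((j+1:ℕ):ℤ)) (x (j+1)) :=
      fun j => congrFun hw (j+1)
    obtain ⟨y0, v0, hy0, hv0⟩ := key C D f hf_chain hqis_inj hqis_surj 0
        (n + ((0:ℕ):ℤ)) ((n+1) + ((0:ℕ):ℤ)) ((n+1) + ((0:ℕ):ℤ) + 1) ((n-1) + ((0:ℕ):ℤ))
        (by push_cast; ring) rfl (by push_cast; ring)
        (x 0) (w 0)
        (by have h := hx0; rwa [add_zero] at h)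
        (by have h := hw0; rwa [add_zero] at h)
    have inv01 : C.δ 0 (n + ((0:ℕ):ℤ)) ((n-1) + ((0+1:ℕ):ℤ))
        (C.d 0 ((n+1) + ((0:ℕ):ℤ)) (n + ((0:ℕ):ℤ)) y0)
        = C.δ 0 (n + ((0:ℕ):ℤ)) ((n-1) + ((0+1:ℕ):ℤ)) (x 0) := by rw [hy0]
    have inv02 : D.δ 0 ((n+1) + ((0:ℕ):ℤ)) (n + ((0+1:ℕ):ℤ))
        (D.d 0 ((n+1) + ((0:ℕ):ℤ) + 1) ((n+1) + ((0:ℕ):ℤ)) v0)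
        = D.δ 0 ((n+1) + ((0:ℕ):ℤ)) (n + ((0+1:ℕ):ℤ))
            (w 0 - f 0 ((n+1) + ((0:ℕ):ℤ)) y0) := by rw [hv0]
    obtain ⟨g, hg0, hgs⟩ := exists_seq'
      (S := fun k => Σ' (y : C.X k ((n+1) + (k:ℤ))) (v : D.X k ((n+1) + (k:ℤ) + 1)),
        C.δ k (n + (k:ℤ)) ((n-1) + ((k+1:ℕ):ℤ)) (C.d k ((n+1) + (k:ℤ)) (n + (k:ℤ)) y)
            = C.δ k (n + (k:ℤ)) ((n-1) + ((k+1:ℕ):ℤ)) (x k) ∧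
        D.δ k ((n+1) + (k:ℤ)) (n + ((k+1:ℕ):ℤ))
              (D.d k ((n+1) + (k:ℤ) + 1) ((n+1) + (k:ℤ)) v)
            = D.δ k ((n+1) + (k:ℤ)) (n + ((k+1:ℕ):ℤ)) (w k - f k ((n+1) + (k:ℤ)) y))
      (R := fun k s s' =>
        C.d (k+1) ((n+1) + ((k+1:ℕ):ℤ)) (n + ((k+1:ℕ):ℤ)) s'.1
          + C.δ k ((n+1) + (k:ℤ)) (n + ((k+1:ℕ):ℤ)) s.1 = x (k+1))
      ⟨y0, v0, inv01, inv02⟩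
      (by
        intro k s
        obtain ⟨y, v, i1, i2⟩ := s
        have hx1 : C.d (k+1) (n + ((k+1:ℕ):ℤ)) ((n-1) + ((k+1:ℕ):ℤ)) (x (k+1))
            = - C.δ k (n + (k:ℤ)) ((n-1) + ((k+1:ℕ):ℤ)) (x k) :=
          eq_neg_of_add_eq_zero_left (hxc k)
        have hdy := anti' C k ((n+1)+(k:ℤ)) (n+(k:ℤ))
          (n + ((k+1:ℕ):ℤ)) ((n-1) + ((k+1:ℕ):ℤ))
          (by push_cast; ring) (by push_cast; ring) y
        have hu : C.d (k+1) (n + ((k+1:ℕ):ℤ)) ((n-1) + ((k+1:ℕ):ℤ))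
            (x (k+1) - C.δ k ((n+1)+(k:ℤ)) (n + ((k+1:ℕ):ℤ)) y) = 0 := by
          rw [map_sub, hx1, hdy, i1]; abel
        have hw1 : D.d (k+1) ((n+1) + ((k+1:ℕ):ℤ)) (n + ((k+1:ℕ):ℤ)) (w (k+1))
            = f (k+1) (n + ((k+1:ℕ):ℤ)) (x (k+1))
              - D.δ k ((n+1)+(k:ℤ)) (n + ((k+1:ℕ):ℤ)) (w k) :=
          eq_sub_of_add_eq (hwc k)
        have hdv := anti' D k ((n+1)+(k:ℤ)+1) ((n+1)+(k:ℤ))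
          ((n+1) + ((k+1:ℕ):ℤ)) (n + ((k+1:ℕ):ℤ))
          (by push_cast; ring) (by push_cast; ring) v
        have ht : D.d (k+1) ((n+1) + ((k+1:ℕ):ℤ)) (n + ((k+1:ℕ):ℤ))
            (w (k+1) - D.δ k ((n+1)+(k:ℤ)+1) ((n+1) + ((k+1:ℕ):ℤ)) v)
            = f (k+1) (n + ((k+1:ℕ):ℤ))
                (x (k+1) - C.δ k ((n+1)+(k:ℤ)) (n + ((k+1:ℕ):ℤ)) y) := by
          rw [map_sub, hw1, hdv, i2,
            map_sub (D.δ k ((n+1)+(k:ℤ)) (n + ((k+1:ℕ):ℤ))),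
            map_sub (f (k+1) (n + ((k+1:ℕ):ℤ))), hf_δ]
          abel
        obtain ⟨y', v', hy', hv'⟩ := key C D f hf_chain hqis_inj hqis_surj (k+1)
          (n + ((k+1:ℕ):ℤ)) ((n+1) + ((k+1:ℕ):ℤ)) ((n+1) + ((k+1:ℕ):ℤ) + 1)
          ((n-1) + ((k+1:ℕ):ℤ))
          (by push_cast; ring) rfl (by push_cast; ring) _ _ hu ht
        refine ⟨⟨y', v', ?_, ?_⟩, ?_⟩
        · rw [hy', map_sub, C.δ_sq, sub_zero]
        · rw [hv', map_sub, map_sub, D.δ_sq, sub_zero, map_sub]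
        · show C.d (k+1) ((n+1) + ((k+1:ℕ):ℤ)) (n + ((k+1:ℕ):ℤ)) y'
              + C.δ k ((n+1)+(k:ℤ)) (n + ((k+1:ℕ):ℤ)) y = x (k+1)
          rw [hy']; abel)
    refine ⟨fun k => (g k).1, ?_⟩
    funext k
    cases k with
    | zero =>
      show C.d 0 ((n+1) + ((0:ℕ):ℤ)) (n + ((0:ℕ):ℤ)) ((g 0).1) + 0 = x 0
      rw [hg0]
      show C.d 0 ((n+1) + ((0:ℕ):ℤ)) (n + ((0:ℕ):ℤ)) y0 + 0 = x 0
      rw [add_zero]; exact hy0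
    | succ k => exact hgs k
  · -- surjectivity on homology
    intro z hz
    have hz0 : D.d 0 (n + ((0:ℕ):ℤ)) ((n-1) + ((0:ℕ):ℤ)) (z 0) + 0 = 0 := congrFun hz 0
    have hzc : ∀ j : ℕ,
        D.d (j+1) (n + ((j+1:ℕ):ℤ)) ((n-1) + ((j+1:ℕ):ℤ)) (z (j+1))
          + D.δ j (n + (j:ℤ)) ((n-1) + ((j+1:ℕ):ℤ)) (z j) = 0 :=
      fun j => congrFun hz (j+1)
    obtain ⟨a0, b0, ha0, hb0⟩ := key C D f hf_chain hqis_inj hqis_surj 0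
        ((n-1) + ((0:ℕ):ℤ)) (n + ((0:ℕ):ℤ)) ((n+1) + ((0:ℕ):ℤ)) ((n-2) + ((0:ℕ):ℤ))
        (by push_cast; ring) (by push_cast; ring) (by push_cast; ring)
        0 (z 0)
        (by rw [map_zero])
        (by have h := hz0; rw [add_zero] at h; rw [map_zero]; exact h)
    have inv01 : C.δ 0 ((n-1) + ((0:ℕ):ℤ)) ((n-2) + ((0+1:ℕ):ℤ))
        (C.d 0 (n + ((0:ℕ):ℤ)) ((n-1) + ((0:ℕ):ℤ)) a0) = 0 := by
      rw [ha0, map_zero]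
    have inv02 : D.δ 0 (n + ((0:ℕ):ℤ)) ((n-1) + ((0+1:ℕ):ℤ))
        (D.d 0 ((n+1) + ((0:ℕ):ℤ)) (n + ((0:ℕ):ℤ)) b0)
        = D.δ 0 (n + ((0:ℕ):ℤ)) ((n-1) + ((0+1:ℕ):ℤ))
            (z 0 - f 0 (n + ((0:ℕ):ℤ)) a0) := by rw [hb0]
    obtain ⟨g, hg0, hgs⟩ := exists_seq'
      (S := fun k => Σ' (a : C.X k (n + (k:ℤ))) (b : D.X k ((n+1) + (k:ℤ))),
        C.δ k ((n-1) + (k:ℤ)) ((n-2) + ((k+1:ℕ):ℤ))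
            (C.d k (n + (k:ℤ)) ((n-1) + (k:ℤ)) a) = 0 ∧
        D.δ k (n + (k:ℤ)) ((n-1) + ((k+1:ℕ):ℤ)) (D.d k ((n+1) + (k:ℤ)) (n + (k:ℤ)) b)
            = D.δ k (n + (k:ℤ)) ((n-1) + ((k+1:ℕ):ℤ)) (z k - f k (n + (k:ℤ)) a))
      (R := fun k s s' =>
        (C.d (k+1) (n + ((k+1:ℕ):ℤ)) ((n-1) + ((k+1:ℕ):ℤ)) s'.1
          + C.δ k (n + (k:ℤ)) ((n-1) + ((k+1:ℕ):ℤ)) s.1 = 0) ∧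
        (D.d (k+1) ((n+1) + ((k+1:ℕ):ℤ)) (n + ((k+1:ℕ):ℤ)) s'.2.1
          + D.δ k ((n+1) + (k:ℤ)) (n + ((k+1:ℕ):ℤ)) s.2.1
          = z (k+1) - f (k+1) (n + ((k+1:ℕ):ℤ)) s'.1))
      ⟨a0, b0, inv01, inv02⟩
      (by
        intro k s
        obtain ⟨a, b, i1, i2⟩ := s
        have hda := anti' C k (n+(k:ℤ)) ((n-1)+(k:ℤ))
          ((n-1) + ((k+1:ℕ):ℤ)) ((n-2) + ((k+1:ℕ):ℤ))
          (by push_cast; ring) (by push_cast; ring) a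
        have hu : C.d (k+1) ((n-1) + ((k+1:ℕ):ℤ)) ((n-2) + ((k+1:ℕ):ℤ))
            (- C.δ k (n+(k:ℤ)) ((n-1) + ((k+1:ℕ):ℤ)) a) = 0 := by
          rw [map_neg, hda, i1]; simp
        have hz1 : D.d (k+1) (n + ((k+1:ℕ):ℤ)) ((n-1) + ((k+1:ℕ):ℤ)) (z (k+1))
            = - D.δ k (n + (k:ℤ)) ((n-1) + ((k+1:ℕ):ℤ)) (z k) :=
          eq_neg_of_add_eq_zero_left (hzc k)
        have hdb := anti' D k ((n+1)+(k:ℤ)) (n+(k:ℤ))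
          (n + ((k+1:ℕ):ℤ)) ((n-1) + ((k+1:ℕ):ℤ))
          (by push_cast; ring) (by push_cast; ring) b
        have ht : D.d (k+1) (n + ((k+1:ℕ):ℤ)) ((n-1) + ((k+1:ℕ):ℤ))
            (z (k+1) - D.δ k ((n+1)+(k:ℤ)) (n + ((k+1:ℕ):ℤ)) b)
            = f (k+1) ((n-1) + ((k+1:ℕ):ℤ))
                (- C.δ k (n+(k:ℤ)) ((n-1) + ((k+1:ℕ):ℤ)) a) := by
          rw [map_sub, hz1, hdb, i2, map_neg, hf_δ,
            map_sub (D.δ k (n+(k:ℤ)) ((n-1) + ((k+1:ℕ):ℤ)))]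
          abel
        obtain ⟨a', b', ha', hb'⟩ := key C D f hf_chain hqis_inj hqis_surj (k+1)
          ((n-1) + ((k+1:ℕ):ℤ)) (n + ((k+1:ℕ):ℤ)) ((n+1) + ((k+1:ℕ):ℤ))
          ((n-2) + ((k+1:ℕ):ℤ))
          (by push_cast; ring) (by push_cast; ring) (by push_cast; ring) _ _ hu ht
        refine ⟨⟨a', b', ?_, ?_⟩, ?_, ?_⟩
        · rw [ha', map_neg, C.δ_sq, neg_zero]
        · rw [hb', map_sub, map_sub, D.δ_sq, sub_zero, map_sub]
        · show C.d (k+1) (n + ((k+1:ℕ):ℤ)) ((n-1) + ((k+1:ℕ):ℤ)) a'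
              + C.δ k (n+(k:ℤ)) ((n-1) + ((k+1:ℕ):ℤ)) a = 0
          rw [ha']; abel
        · show D.d (k+1) ((n+1) + ((k+1:ℕ):ℤ)) (n + ((k+1:ℕ):ℤ)) b'
              + D.δ k ((n+1)+(k:ℤ)) (n + ((k+1:ℕ):ℤ)) b
              = z (k+1) - f (k+1) (n + ((k+1:ℕ):ℤ)) a'
          rw [hb']; abel)
    refine ⟨fun k => (g k).1, ?_, fun k => (g k).2.1, ?_⟩
    · funext k
      cases k with
      | zero =>
        show C.d 0 (n + ((0:ℕ):ℤ)) ((n-1) + ((0:ℕ):ℤ)) ((g 0).1) + 0 = 0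
        rw [hg0]
        show C.d 0 (n + ((0:ℕ):ℤ)) ((n-1) + ((0:ℕ):ℤ)) a0 + 0 = 0
        rw [ha0, add_zero]
      | succ k => exact (hgs k).1
    · funext k
      cases k with
      | zero =>
        show D.d 0 ((n+1) + ((0:ℕ):ℤ)) (n + ((0:ℕ):ℤ)) ((g 0).2.1) + 0
          = z 0 - f 0 (n + ((0:ℕ):ℤ)) ((g 0).1)
        rw [hg0]
        show D.d 0 ((n+1) + ((0:ℕ):ℤ)) (n + ((0:ℕ):ℤ)) b0 + 0
          = z 0 - f 0 (n + ((0:ℕ):ℤ)) a0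
        rw [add_zero]; exact hb0
      | succ k => exact (hgs k).2
end

section
/- Let U be a finite-dimensional smooth manifold without boundary, let T : U → ℝ be a C∞ function with T(u) ≥ 0 for all u, and set Ũ := {(u, t) ∈ U × ℝ : 0 ≤ t ≤ T(u)}. Let V be an open neighborhood of Ũ in U × ℝ and F : V → ℝ a C∞ function such that for every u ∈ U and every integer m ≥ 0, the m-th derivative of the function t ↦ F(u, t) vanishes at t = 0 and at t = T(u). Then the function f̃ : U × ℝ → ℝ defined by f̃(u, t) = F(u, t) if 0 ≤ t ≤ T(u) and f̃(u, t) = 0 otherwise, is of class C∞ on U × ℝ. -/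
open scoped Manifold

open scoped Manifold ContDiff
open Set Filter Asymptotics
set_option linter.unusedSectionVars false

universe u v

section Core

variable {E : Type u} [NormedAddCommGroup E] [NormedSpace ℝ E]

lemma one_le_inf : (1 : WithTop ℕ∞) ≤ ∞ := by exact_mod_cast le_top
lemma two_le_inf : (2 : WithTop ℕ∞) ≤ ∞ := by
  rw [show ((2:WithTop ℕ∞)) = ((2:ℕ∞) : WithTop ℕ∞) by norm_cast]
  exact_mod_cast le_top
lemma inf_add_one : (∞ : WithTop ℕ∞) + 1 ≤ ∞ := le_of_eq rfl

variable {F : Type v} [NormedAddCommGroup F] [NormedSpace ℝ F]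

lemma slice_contDiffOn {V' : Set (E × ℝ)} {G : E × ℝ → F}
    (hG : ContDiffOn ℝ ∞ G V') (x : E) :
    ContDiffOn ℝ ∞ (fun t => G (x, t)) {t | (x, t) ∈ V'} :=
  hG.comp ((contDiff_prodMk_right x).contDiffOn) (fun _ ht => ht)

lemma isOpen_slice {V' : Set (E × ℝ)} (hV' : IsOpen V') (x : E) :
    IsOpen {t : ℝ | (x, t) ∈ V'} :=
  hV'.preimage (by fun_prop)

/-- iterated derivative commutes with postcomposition by a CLM, for functions
smooth on an open set. -/
lemma iteratedDeriv_clm_comp {F' : Type*} [NormedAddCommGroup F'] [NormedSpace ℝ F']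
    (m : ℕ) : ∀ (φ : ℝ → F) {s : Set ℝ}, IsOpen s → ContDiffOn ℝ ∞ φ s →
    ∀ (ℓ : F →L[ℝ] F') {t : ℝ}, t ∈ s →
    iteratedDeriv m (fun t' => ℓ (φ t')) t = ℓ (iteratedDeriv m φ t) := by
  induction m with
  | zero => intro φ s hs hφ ℓ t ht; simp
  | succ m ih =>
    intro φ s hs hφ ℓ t ht
    rw [iteratedDeriv_succ', iteratedDeriv_succ']
    have hev : (fun t' => deriv (fun t'' => ℓ (φ t'')) t') =ᶠ[nhds t]
        fun t' => ℓ (deriv φ t') := by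
      filter_upwards [hs.mem_nhds ht] with t' ht'
      have hd : DifferentiableAt ℝ φ t' :=
        (hφ.differentiableOn (by simp)).differentiableAt (hs.mem_nhds ht')
      exact (ℓ.hasFDerivAt.comp_hasDerivAt t' hd.hasDerivAt).deriv
    rw [Filter.EventuallyEq.iteratedDeriv_eq m hev]
    exact ih (deriv φ) hs (hφ.deriv_of_isOpen hs inf_add_one) ℓ ht

lemma hasDerivAt_slice {V' : Set (E × ℝ)} {G : E × ℝ → F} (hV' : IsOpen V')
    (hG : ContDiffOn ℝ ∞ G V') {x : E} {t₀ : ℝ} (hq : (x, t₀) ∈ V') :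
    HasDerivAt (fun t => G (x, t)) (fderiv ℝ G (x, t₀) ((0 : E), (1 : ℝ))) t₀ := by
  have hGq : DifferentiableAt ℝ G (x, t₀) :=
    (hG.differentiableOn (by simp)).differentiableAt (hV'.mem_nhds hq)
  have h1 : HasDerivAt (fun t : ℝ => (x, t)) ((0 : E), (1 : ℝ)) t₀ :=
    HasDerivAt.prodMk (hasDerivAt_const _ _) (hasDerivAt_id _)
  simpa [Function.comp_def] using hGq.hasFDerivAt.comp_hasDerivAt t₀ h1

end Core

section KS

variable {E : Type u} [NormedAddCommGroup E] [NormedSpace ℝ E]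
variable {F : Type v} [NormedAddCommGroup F] [NormedSpace ℝ F]
variable {O : Set E} {τ : E → ℝ} {V' : Set (E × ℝ)}

/-- Key step: flatness of all pure `t`-derivatives along a smooth boundary curve `c`
propagates to the full Fréchet derivative. Applied version. -/
lemma ks (hO : IsOpen O) (hV' : IsOpen V')
    {c : E → ℝ} (hc : ContDiffOn ℝ ∞ c O)
    (hcV : ∀ y ∈ O, (y, c y) ∈ V') :
    ∀ (m : ℕ) (G : E × ℝ → F), ContDiffOn ℝ ∞ G V' →
      (∀ y ∈ O, ∀ k : ℕ, iteratedDeriv k (fun t => G (y, t)) (c y) = 0) →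
      ∀ x ∈ O, ∀ w : E × ℝ,
        iteratedDeriv m (fun t => fderiv ℝ G (x, t) w) (c x) = 0 := by
  intro m
  induction m with
  | zero =>
    intro G hG hflat x hx w
    rw [iteratedDeriv_zero]
    have hqV : (x, c x) ∈ V' := hcV x hx
    have hGq : DifferentiableAt ℝ G (x, c x) :=
      (hG.differentiableOn (by simp)).differentiableAt (hV'.mem_nhds hqV)
    -- t-derivative vanishes
    have h01 : fderiv ℝ G (x, c x) ((0 : E), (1 : ℝ)) = 0 := by
      have h := (hasDerivAt_slice hV' hG hqV).deriv
      have flat1 := hflat x hx 1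
      rw [iteratedDeriv_one] at flat1
      rw [← h]
      exact flat1
    -- derivative along the boundary graph vanishes
    have hcd : DifferentiableAt ℝ c x :=
      (hc.differentiableOn (by simp)).differentiableAt (hO.mem_nhds hx)
    have hφ : HasFDerivAt (fun y => (y, c y))
        ((ContinuousLinearMap.id ℝ E).prod (fderiv ℝ c x)) x :=
      HasFDerivAt.prodMk (hasFDerivAt_id x) hcd.hasFDerivAt
    have hcomp : HasFDerivAt (fun y => G (y, c y))
        ((fderiv ℝ G (x, c x)).comp
          ((ContinuousLinearMap.id ℝ E).prod (fderiv ℝ c x))) x :=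
      hGq.hasFDerivAt.comp x hφ
    have hzero : HasFDerivAt (fun y => G (y, c y)) (0 : E →L[ℝ] F) x := by
      have hev : (fun y => G (y, c y)) =ᶠ[nhds x] fun _ => (0 : F) := by
        filter_upwards [hO.mem_nhds hx] with y hy
        have := hflat y hy 0
        rwa [iteratedDeriv_zero] at this
      exact (hasFDerivAt_const (0 : F) x).congr_of_eventuallyEq hev
    have huniq := hcomp.unique hzero
    have hvc : ∀ v : E, fderiv ℝ G (x, c x) (v, fderiv ℝ c x v) = 0 := by
      intro v
      have := ContinuousLinearMap.ext_iff.1 huniq v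
      simpa using this
    have hw : w = (w.1, fderiv ℝ c x w.1) +
        (w.2 - fderiv ℝ c x w.1) • ((0 : E), (1 : ℝ)) := by
      ext
      · simp
      · simp
    rw [hw, map_add, map_smul, hvc, h01, smul_zero, add_zero]
  | succ m ih =>
    intro G hG hflat x hx w
    rw [iteratedDeriv_succ']
    have hqV : (x, c x) ∈ V' := hcV x hx
    have hH : ContDiffOn ℝ ∞ (fderiv ℝ G) V' := hG.fderiv_of_isOpen hV' inf_add_one
    set B := fun q : E × ℝ => fderiv ℝ G q ((0 : E), (1 : ℝ)) with hB_def
    have hB : ContDiffOn ℝ ∞ B V' :=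
      (ContinuousLinearMap.apply ℝ F ((0 : E), (1 : ℝ))).contDiff.comp_contDiffOn hH
    -- rewrite the inner derivative
    have hev : (fun t => deriv (fun t' => fderiv ℝ G (x, t') w) t) =ᶠ[nhds (c x)]
        fun t => fderiv ℝ B (x, t) w := by
      have hsl : IsOpen {t : ℝ | (x, t) ∈ V'} := isOpen_slice hV' x
      filter_upwards [hsl.mem_nhds (show c x ∈ _ from hqV)] with t' ht'
      have hHq : DifferentiableAt ℝ (fderiv ℝ G) (x, t') :=
        (hH.differentiableOn (by simp)).differentiableAt (hV'.mem_nhds ht')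
      -- LHS
      have h2 : HasDerivAt (fun t => fderiv ℝ G (x, t))
          (fderiv ℝ (fderiv ℝ G) (x, t') ((0:E),(1:ℝ))) t' :=
        hasDerivAt_slice hV' hH ht'
      have hl : HasDerivAt (fun t => fderiv ℝ G (x, t) w)
          (fderiv ℝ (fderiv ℝ G) (x, t') ((0:E),(1:ℝ)) w) t' := by
        simpa [Function.comp_def] using
          (ContinuousLinearMap.apply ℝ F w).hasFDerivAt.comp_hasDerivAt t' h2
      rw [hl.deriv]
      -- RHS
      have hBq : HasFDerivAt B
          ((ContinuousLinearMap.apply ℝ F ((0:E),(1:ℝ))).comp (fderiv ℝ (fderiv ℝ G) (x, t'))) (x, t') :=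
        (ContinuousLinearMap.apply ℝ F ((0:E),(1:ℝ))).hasFDerivAt.comp (x, t') hHq.hasFDerivAt
      rw [hBq.fderiv]
      -- symmetry of second derivative
      have hsym : IsSymmSndFDerivAt ℝ G (x, t') :=
        ((hG.contDiffAt (hV'.mem_nhds ht')).isSymmSndFDerivAt (by rw [minSmoothness_of_isRCLikeNormedField]; exact two_le_inf))
      simpa using hsym.eq ((0:E),(1:ℝ)) w
    rw [Filter.EventuallyEq.iteratedDeriv_eq m hev]
    -- flatness of B
    have hBflat : ∀ y ∈ O, ∀ k : ℕ, iteratedDeriv k (fun t => B (y, t)) (c y) = 0 := by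
      intro y hy k
      have hyV : (y, c y) ∈ V' := hcV y hy
      have hsl : IsOpen {t : ℝ | (y, t) ∈ V'} := isOpen_slice hV' y
      have hev2 : (fun t => B (y, t)) =ᶠ[nhds (c y)] deriv (fun t => G (y, t)) := by
        filter_upwards [hsl.mem_nhds (show c y ∈ _ from hyV)] with t' ht'
        exact ((hasDerivAt_slice hV' hG ht').deriv).symm
      rw [Filter.EventuallyEq.iteratedDeriv_eq k hev2, ← iteratedDeriv_succ']
      exact hflat y hy (k + 1)
    exact ih B hB hBflat x hx w

/-- CLM-valued version of `ks`. -/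
lemma ks_tflat (hO : IsOpen O) (hV' : IsOpen V')
    {c : E → ℝ} (hc : ContDiffOn ℝ ∞ c O)
    (hcV : ∀ y ∈ O, (y, c y) ∈ V')
    (G : E × ℝ → F) (hG : ContDiffOn ℝ ∞ G V')
    (hflat : ∀ y ∈ O, ∀ k : ℕ, iteratedDeriv k (fun t => G (y, t)) (c y) = 0) :
    ∀ y ∈ O, ∀ k : ℕ, iteratedDeriv k (fun t => fderiv ℝ G (y, t)) (c y) = 0 := by
  intro y hy k
  have hyV : (y, c y) ∈ V' := hcV y hy
  have hΦ : ContDiffOn ℝ ∞ (fun t => fderiv ℝ G (y, t)) {t : ℝ | (y, t) ∈ V'} :=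
    slice_contDiffOn (hG.fderiv_of_isOpen hV' inf_add_one) y
  apply ContinuousLinearMap.ext
  intro w
  have h := iteratedDeriv_clm_comp k (fun t => fderiv ℝ G (y, t)) (isOpen_slice hV' y) hΦ
      (ContinuousLinearMap.apply ℝ F w) (show c y ∈ _ from hyV)
  have h2 := ks hO hV' hc hcV k G hG hflat y hy w
  simp only [ContinuousLinearMap.apply_apply] at h
  rw [ContinuousLinearMap.zero_apply, ← h]
  exact h2

end KS

section Smooth

variable {E : Type u} [NormedAddCommGroup E] [NormedSpace ℝ E]
variable {O : Set E} {τ : E → ℝ} {V' : Set (E × ℝ)}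

lemma isOpen_lt_graph (hO : IsOpen O) (hτc : ContinuousOn τ O) :
    IsOpen {q : E × ℝ | q.1 ∈ O ∧ q.2 < τ q.1} := by
  have hcont : ContinuousOn (fun q : E × ℝ => τ q.1 - q.2) (O ×ˢ (univ : Set ℝ)) :=
    (hτc.comp continuous_fst.continuousOn (fun q hq => hq.1)).sub continuous_snd.continuousOn
  have h := hcont.isOpen_inter_preimage (t := Ioi (0:ℝ)) (hO.prod isOpen_univ) isOpen_Ioi
  convert h using 1
  ext q
  constructor
  · rintro ⟨hq1, hq2⟩; exact ⟨⟨hq1, mem_univ _⟩, by simpa [sub_pos] using hq2⟩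
  · rintro ⟨⟨hq1, -⟩, hq2⟩; exact ⟨hq1, by simpa [sub_pos] using hq2⟩

lemma isOpen_gt_graph (hO : IsOpen O) (hτc : ContinuousOn τ O) :
    IsOpen {q : E × ℝ | q.1 ∈ O ∧ τ q.1 < q.2} := by
  have hcont : ContinuousOn (fun q : E × ℝ => τ q.1 - q.2) (O ×ˢ (univ : Set ℝ)) :=
    (hτc.comp continuous_fst.continuousOn (fun q hq => hq.1)).sub continuous_snd.continuousOn
  have h := hcont.isOpen_inter_preimage (t := Iio (0:ℝ)) (hO.prod isOpen_univ) isOpen_Iio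
  convert h using 1
  ext q
  constructor
  · rintro ⟨hq1, hq2⟩; exact ⟨⟨hq1, mem_univ _⟩, by simpa [sub_neg] using hq2⟩
  · rintro ⟨⟨hq1, -⟩, hq2⟩; exact ⟨hq1, by simpa [sub_neg] using hq2⟩

lemma hasFDerivAt_piece {F : Type v} [NormedAddCommGroup F] [NormedSpace ℝ F]
    (hO : IsOpen O) (hτ : ContDiffOn ℝ ∞ τ O) (hτ0 : ∀ y ∈ O, 0 ≤ τ y)
    (hV' : IsOpen V') (hS : ∀ p : E × ℝ, p.1 ∈ O → 0 ≤ p.2 → p.2 ≤ τ p.1 → p ∈ V')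
    (G : E × ℝ → F) (hG : ContDiffOn ℝ ∞ G V')
    (hflat : ∀ y ∈ O, ∀ k : ℕ, iteratedDeriv k (fun t => G (y, t)) 0 = 0 ∧
        iteratedDeriv k (fun t => G (y, t)) (τ y) = 0)
    {p : E × ℝ} (hp : p.1 ∈ O) :
    HasFDerivAt (fun q : E × ℝ => if 0 ≤ q.2 ∧ q.2 ≤ τ q.1 then G q else 0)
      (if 0 ≤ p.2 ∧ p.2 ≤ τ p.1 then fderiv ℝ G p else 0) p := by
  by_cases h1 : 0 < p.2 ∧ p.2 < τ p.1
  · -- interior of the region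
    have hpV : p ∈ V' := hS p hp h1.1.le h1.2.le
    have hN : ({q : E × ℝ | 0 < q.2} ∩ {q | q.1 ∈ O ∧ q.2 < τ q.1}) ∈ nhds p := by
      refine IsOpen.mem_nhds ?_ ⟨h1.1, hp, h1.2⟩
      exact (isOpen_Ioi.preimage continuous_snd).inter
        (isOpen_lt_graph hO (hτ.continuousOn))
    have hev : (fun q : E × ℝ => if 0 ≤ q.2 ∧ q.2 ≤ τ q.1 then G q else 0) =ᶠ[nhds p] G := by
      filter_upwards [hN] with q hq
      exact if_pos ⟨hq.1.le, hq.2.2.le⟩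
    rw [if_pos ⟨h1.1.le, h1.2.le⟩]
    exact (((hG.differentiableOn (by simp)).differentiableAt
      (hV'.mem_nhds hpV)).hasFDerivAt).congr_of_eventuallyEq hev
  by_cases h2 : 0 ≤ p.2 ∧ p.2 ≤ τ p.1
  · -- boundary
    have hpV : p ∈ V' := hS p hp h2.1 h2.2
    have hbd : p.2 = 0 ∨ p.2 = τ p.1 := by
      rcases eq_or_lt_of_le h2.1 with h | h
      · exact Or.inl h.symm
      · right
        rcases eq_or_lt_of_le h2.2 with h' | h'
        · exact h'
        · exact absurd ⟨h, h'⟩ h1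
    obtain ⟨c, hcC, hcVmem, hflatc, hpc⟩ :
        ∃ c : E → ℝ, ContDiffOn ℝ ∞ c O ∧ (∀ y ∈ O, (y, c y) ∈ V') ∧
          (∀ y ∈ O, ∀ k : ℕ, iteratedDeriv k (fun t => G (y, t)) (c y) = 0) ∧
          c p.1 = p.2 := by
      rcases hbd with h | h
      · exact ⟨fun _ => 0, contDiffOn_const, fun y hy => hS _ hy le_rfl (hτ0 y hy),
          fun y hy k => (hflat y hy k).1, h.symm⟩
      · exact ⟨τ, hτ, fun y hy => hS _ hy (hτ0 y hy) le_rfl,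
          fun y hy k => (hflat y hy k).2, h.symm⟩
    have hfd : fderiv ℝ G p = 0 := by
      have h := ks_tflat hO hV' hcC hcVmem G hG hflatc p.1 hp 0
      rw [iteratedDeriv_zero, hpc] at h
      simpa using h
    have hG0 : G p = 0 := by
      have h := hflatc p.1 hp 0
      rw [iteratedDeriv_zero, hpc] at h
      simpa using h
    have hgp : (if 0 ≤ p.2 ∧ p.2 ≤ τ p.1 then G p else 0) = 0 := by
      rw [if_pos h2, hG0]
    rw [if_pos h2, hfd]
    have hGd : HasFDerivAt G (0 : E × ℝ →L[ℝ] F) p :=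
      hfd ▸ ((hG.differentiableOn (by simp)).differentiableAt
        (hV'.mem_nhds hpV)).hasFDerivAt
    have hlo := hGd.isLittleO
    show HasFDerivAt _ _ _
    apply HasFDerivAt.of_isLittleO
    refine (Asymptotics.isBigO_of_le (nhds p) fun q => ?_).trans_isLittleO hlo
    simp only [ContinuousLinearMap.zero_apply, sub_zero, hgp, hG0, ite_self]
    by_cases hq : 0 ≤ q.2 ∧ q.2 ≤ τ q.1
    · rw [if_pos hq]
    · rw [if_neg hq]; simp [norm_nonneg]
  · -- outside the region
    rw [if_neg h2]
    push_neg at h2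
    rcases lt_or_ge p.2 0 with hneg | hpos
    · have hev : (fun q : E × ℝ => if 0 ≤ q.2 ∧ q.2 ≤ τ q.1 then G q else 0)
          =ᶠ[nhds p] fun _ => (0 : F) := by
        filter_upwards [(isOpen_Iio.preimage continuous_snd).mem_nhds
          (show p.2 < 0 from hneg)] with q hq
        exact if_neg fun hc => absurd hc.1 (not_le.2 hq)
      exact (hasFDerivAt_const (0 : F) p).congr_of_eventuallyEq hev
    · have hgt : τ p.1 < p.2 := h2 hpos
      have hev : (fun q : E × ℝ => if 0 ≤ q.2 ∧ q.2 ≤ τ q.1 then G q else 0)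
          =ᶠ[nhds p] fun _ => (0 : F) := by
        filter_upwards [(isOpen_gt_graph hO hτ.continuousOn).mem_nhds ⟨hp, hgt⟩] with q hq
        exact if_neg fun hc => absurd hc.2 (not_le.2 hq.2)
      exact (hasFDerivAt_const (0 : F) p).congr_of_eventuallyEq hev

lemma smooth_aux (hO : IsOpen O) (hτ : ContDiffOn ℝ ∞ τ O) (hτ0 : ∀ y ∈ O, 0 ≤ τ y)
    (hV' : IsOpen V') (hS : ∀ p : E × ℝ, p.1 ∈ O → 0 ≤ p.2 → p.2 ≤ τ p.1 → p ∈ V') :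
    ∀ (n : ℕ) {F : Type (max u v)} [NormedAddCommGroup F] [NormedSpace ℝ F] (G : E × ℝ → F),
      ContDiffOn ℝ ∞ G V' →
      (∀ y ∈ O, ∀ k : ℕ, iteratedDeriv k (fun t => G (y, t)) 0 = 0 ∧
        iteratedDeriv k (fun t => G (y, t)) (τ y) = 0) →
      ContDiffOn ℝ n (fun p : E × ℝ => if 0 ≤ p.2 ∧ p.2 ≤ τ p.1 then G p else 0)
        (O ×ˢ (univ : Set ℝ)) := by
  intro n
  induction n with
  | zero =>
    intro F _ _ G hG hflat
    rw [show ((0 : ℕ) : WithTop ℕ∞) = 0 from Nat.cast_zero, contDiffOn_zero]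
    intro p hp
    exact ((hasFDerivAt_piece hO hτ hτ0 hV' hS G hG hflat
      (mem_prod.1 hp).1).continuousAt).continuousWithinAt
  | succ n ih =>
    intro F _ _ G hG hflat
    have hW : IsOpen (O ×ˢ (univ : Set ℝ)) := hO.prod isOpen_univ
    have key : ∀ p ∈ O ×ˢ (univ : Set ℝ),
        HasFDerivAt (fun q : E × ℝ => if 0 ≤ q.2 ∧ q.2 ≤ τ q.1 then G q else 0)
          (if 0 ≤ p.2 ∧ p.2 ≤ τ p.1 then fderiv ℝ G p else 0) p := fun p hp =>
      hasFDerivAt_piece hO hτ hτ0 hV' hS G hG hflat (mem_prod.1 hp).1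
    rw [show (((n + 1 : ℕ)) : WithTop ℕ∞) = (n : WithTop ℕ∞) + 1 by push_cast; ring]
    rw [contDiffOn_succ_iff_fderiv_of_isOpen hW]
    refine ⟨fun p hp => (key p hp).differentiableAt.differentiableWithinAt, by simp, ?_⟩
    have hG' : ContDiffOn ℝ ∞ (fderiv ℝ G) V' := hG.fderiv_of_isOpen hV' inf_add_one
    have hflat' : ∀ y ∈ O, ∀ k : ℕ,
        iteratedDeriv k (fun t => fderiv ℝ G (y, t)) 0 = 0 ∧
        iteratedDeriv k (fun t => fderiv ℝ G (y, t)) (τ y) = 0 := by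
      intro y hy k
      constructor
      · have := ks_tflat hO hV' (contDiffOn_const (c := (0:ℝ)))
          (fun y' hy' => hS _ hy' le_rfl (hτ0 y' hy'))
          G hG (fun y' hy' k' => (hflat y' hy' k').1) y hy k
        simpa using this
      · exact ks_tflat hO hV' hτ
          (fun y' hy' => hS _ hy' (hτ0 y' hy') le_rfl)
          G hG (fun y' hy' k' => (hflat y' hy' k').2) y hy k
    have hih := ih (fderiv ℝ G) hG' hflat'
    exact hih.congr fun p hp => (key p hp).fderiv

end Smooth

/-- Let `U` be a finite-dimensional smooth manifold without boundary,
`T : U → ℝ` a nonnegative `C^∞` function, and `Ũ = {(u,t) | 0 ≤ t ≤ T u} ⊆ U × ℝ`.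
If `F` is `C^∞` on an open neighbourhood `V` of `Ũ` and, for every `u` and every `m ≥ 0`,
the `m`-th derivative of `t ↦ F (u, t)` vanishes at `t = 0` and at `t = T u`, then the
function equal to `F` on `Ũ` and `0` outside is `C^∞` on `U × ℝ`. -/
theorem extension_by_zero_of_flat_boundary
    {E : Type*} [NormedAddCommGroup E] [NormedSpace ℝ E] [FiniteDimensional ℝ E]
    {H : Type*} [TopologicalSpace H] (I : ModelWithCorners ℝ E H) [I.Boundaryless]
    {U : Type*} [TopologicalSpace U] [ChartedSpace H U] [IsManifold I (⊤ : ℕ∞) U]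
    (T : U → ℝ) (hT : ContMDiff I 𝓘(ℝ, ℝ) (⊤ : ℕ∞) T) (hT0 : ∀ u, 0 ≤ T u)
    (V : Set (U × ℝ)) (hV : IsOpen V)
    (hUV : {p : U × ℝ | 0 ≤ p.2 ∧ p.2 ≤ T p.1} ⊆ V)
    (F : U × ℝ → ℝ)
    (hF : ContMDiffOn (I.prod 𝓘(ℝ, ℝ)) 𝓘(ℝ, ℝ) (⊤ : ℕ∞) F V)
    (hder : ∀ (u : U) (m : ℕ),
      iteratedDeriv m (fun t => F (u, t)) 0 = 0 ∧
      iteratedDeriv m (fun t => F (u, t)) (T u) = 0) :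
    ContMDiff (I.prod 𝓘(ℝ, ℝ)) 𝓘(ℝ, ℝ) (⊤ : ℕ∞)
      (fun p : U × ℝ => if 0 ≤ p.2 ∧ p.2 ≤ T p.1 then F p else 0) := by
  have key : ∀ u₀ : U, ContDiffOn ℝ ∞
      (fun p : E × ℝ => if 0 ≤ p.2 ∧ p.2 ≤ T ((extChartAt I u₀).symm p.1) then
        F ((extChartAt I u₀).symm p.1, p.2) else 0)
      ((extChartAt I u₀).target ×ˢ (univ : Set ℝ)) := by
    intro u₀
    have hO : IsOpen (extChartAt I u₀).target := isOpen_extChartAt_target u₀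
    set e := extChartAt I u₀ with he
    set τ : E → ℝ := fun y => T (e.symm y) with hτdef
    have hτ : ContDiffOn ℝ ∞ τ e.target := by
      have h := (contMDiff_iff.1 hT).2 u₀ 0
      simp only [extChartAt_model_space_eq_id, PartialEquiv.refl_coe, Function.comp_def,
        PartialEquiv.refl_source, preimage_univ, inter_univ, id] at h
      exact h
    have hτ0 : ∀ y ∈ e.target, 0 ≤ τ y := fun y _ => hT0 _
    set V₀ : Set (E × ℝ) := (e.target ×ˢ (univ : Set ℝ)) ∩
      {p : E × ℝ | ((e.symm p.1 : U), p.2) ∈ V} with hV₀def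
    have hsymc : ContinuousOn (fun p : E × ℝ => ((e.symm p.1 : U), p.2))
        (e.target ×ˢ (univ : Set ℝ)) :=
      ((continuousOn_extChartAt_symm u₀).comp continuous_fst.continuousOn
        (fun p hp => hp.1)).prodMk continuous_snd.continuousOn
    have hV₀ : IsOpen V₀ := hsymc.isOpen_inter_preimage (hO.prod isOpen_univ) hV
    have hS : ∀ p : E × ℝ, p.1 ∈ e.target → 0 ≤ p.2 → p.2 ≤ τ p.1 → p ∈ V₀ :=
      fun p hp h0 h1 => ⟨⟨hp, mem_univ _⟩, hUV ⟨h0, h1⟩⟩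
    set G₀ : E × ℝ → ℝ := fun p => F ((e.symm p.1 : U), p.2) with hG₀def
    have hG₀ : ContDiffOn ℝ ∞ G₀ V₀ := by
      have h := (contMDiffOn_iff.1 hF).2 (u₀, 0) 0
      simp only [extChartAt_prod, extChartAt_model_space_eq_id, PartialEquiv.prod_symm,
        PartialEquiv.refl_symm, PartialEquiv.refl_coe, PartialEquiv.prod_coe,
        PartialEquiv.prod_coe_symm, Function.comp_def, PartialEquiv.refl_source,
        preimage_univ, inter_univ, id, PartialEquiv.prod_target, PartialEquiv.refl_target,
        univ_prod_univ] at h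
      refine h.congr_mono (fun p hp => rfl) ?_
      rintro p ⟨⟨hp1, -⟩, hp2⟩
      exact ⟨⟨hp1, mem_univ _⟩, hp2⟩
    have hflat₀ : ∀ y ∈ e.target, ∀ k : ℕ,
        iteratedDeriv k (fun t => G₀ (y, t)) 0 = 0 ∧
        iteratedDeriv k (fun t => G₀ (y, t)) (τ y) = 0 := fun y _ k => hder (e.symm y) k
    -- embed ℝ into E × ℝ to fix universes for the core lemma
    have hGu : ContDiffOn ℝ ∞ (fun p => (ContinuousLinearMap.inr ℝ E ℝ) (G₀ p)) V₀ :=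
      ((ContinuousLinearMap.inr ℝ E ℝ).contDiff.comp_contDiffOn hG₀)
    have hflatu : ∀ y ∈ e.target, ∀ k : ℕ,
        iteratedDeriv k (fun t => (ContinuousLinearMap.inr ℝ E ℝ) (G₀ (y, t))) 0 = 0 ∧
        iteratedDeriv k (fun t => (ContinuousLinearMap.inr ℝ E ℝ) (G₀ (y, t))) (τ y) = 0 := by
      intro y hy k
      have h0mem : (0:ℝ) ∈ {t : ℝ | (y, t) ∈ V₀} := hS (y, 0) hy le_rfl (hτ0 y hy)
      have hτmem : τ y ∈ {t : ℝ | (y, t) ∈ V₀} := hS (y, τ y) hy (hτ0 y hy) le_rfl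
      have hsl := slice_contDiffOn hG₀ y
      constructor
      · rw [iteratedDeriv_clm_comp k _ (isOpen_slice hV₀ y) hsl
          (ContinuousLinearMap.inr ℝ E ℝ) h0mem]
        rw [(hflat₀ y hy k).1, map_zero]
      · rw [iteratedDeriv_clm_comp k _ (isOpen_slice hV₀ y) hsl
          (ContinuousLinearMap.inr ℝ E ℝ) hτmem]
        rw [(hflat₀ y hy k).2, map_zero]
    have hu : ContDiffOn ℝ ∞
        (fun p : E × ℝ => if 0 ≤ p.2 ∧ p.2 ≤ τ p.1 then
          (ContinuousLinearMap.inr ℝ E ℝ) (G₀ p) else 0)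
        (e.target ×ˢ (univ : Set ℝ)) :=
      contDiffOn_infty.2 (fun n =>
        smooth_aux hO hτ hτ0 hV₀ hS n
          (fun p => (ContinuousLinearMap.inr ℝ E ℝ) (G₀ p)) hGu hflatu)
    have hdown := (ContinuousLinearMap.snd ℝ E ℝ).contDiff.comp_contDiffOn hu
    refine hdown.congr ?_
    intro p hp
    by_cases h : 0 ≤ p.2 ∧ p.2 ≤ τ p.1
    · simp only [τ, G₀] at h ⊢; simp [h]
    · simp only [τ, G₀] at h ⊢; simp [h]
  rw [contMDiff_iff]
  constructor
  · -- continuity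
    rw [continuous_iff_continuousAt]
    intro q₀
    have hO : IsOpen (extChartAt I q₀.1).target := isOpen_extChartAt_target q₀.1
    have hmem : ((extChartAt I q₀.1) q₀.1, q₀.2) ∈
        (extChartAt I q₀.1).target ×ˢ (univ : Set ℝ) :=
      ⟨(extChartAt I q₀.1).map_source (mem_extChartAt_source q₀.1), mem_univ _⟩
    have hΦ : ContinuousAt (fun q : U × ℝ => (((extChartAt I q₀.1) q.1 : E), q.2)) q₀ :=
      ((continuousAt_extChartAt q₀.1).comp continuous_fst.continuousAt).prodMk
        continuous_snd.continuousAt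
    have hgc : ContinuousAt (fun p : E × ℝ =>
        if 0 ≤ p.2 ∧ p.2 ≤ T ((extChartAt I q₀.1).symm p.1) then
          F ((extChartAt I q₀.1).symm p.1, p.2) else 0)
        ((extChartAt I q₀.1) q₀.1, q₀.2) :=
      ((key q₀.1).continuousOn.continuousAt ((hO.prod isOpen_univ).mem_nhds hmem))
    have hcomp := ContinuousAt.comp (f := fun q : U × ℝ => (((extChartAt I q₀.1) q.1 : E), q.2)) hgc hΦ
    refine hcomp.congr ?_
    filter_upwards [((chartAt H q₀.1).open_source.prod isOpen_univ).mem_nhds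
      (⟨mem_chart_source H q₀.1, mem_univ _⟩ :
        q₀ ∈ (chartAt H q₀.1).source ×ˢ (univ : Set ℝ))] with q hq
    have hinv : (extChartAt I q₀.1).symm ((extChartAt I q₀.1) q.1) = q.1 :=
      (extChartAt I q₀.1).left_inv (by rw [extChartAt_source]; exact hq.1)
    simp only [Function.comp_apply, hinv, Prod.mk.eta]
  · -- chart-wise smoothness
    intro q₀ y
    have hset : (extChartAt (I.prod 𝓘(ℝ, ℝ)) q₀).target ∩
        (extChartAt (I.prod 𝓘(ℝ, ℝ)) q₀).symm ⁻¹'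
          ((fun p : U × ℝ => if 0 ≤ p.2 ∧ p.2 ≤ T p.1 then F p else 0) ⁻¹'
            (extChartAt 𝓘(ℝ, ℝ) y).source) =
        (extChartAt I q₀.1).target ×ˢ (univ : Set ℝ) := by
      simp only [extChartAt_model_space_eq_id, PartialEquiv.refl_source, preimage_univ,
        inter_univ, extChartAt_prod, PartialEquiv.prod_target, PartialEquiv.refl_target]
    rw [hset]
    refine (key q₀.1).congr ?_
    intro p hp
    simp only [extChartAt_prod, extChartAt_model_space_eq_id, PartialEquiv.prod_symm,
      PartialEquiv.refl_symm, PartialEquiv.prod_coe, PartialEquiv.refl_coe,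
      Function.comp_apply, id_eq]
end

section
/- Let U be a finite-dimensional smooth manifold without boundary, N a positive integer, and T₀, T₁ : U → ℝ C∞ functions with T₀, T₁ ≥ 0. For j = 0, 1 set Ũ_j := {(u, t) ∈ U × ℝ : 0 ≤ t ≤ T_j(u)}, and let F_j : V_j → ℝ^N be a C∞ map on an open neighborhood V_j of Ũ_j in U × ℝ. Assume: (a) for every u ∈ U and every integer m ≥ 1, the m-th derivative of t ↦ F_j(u, t) vanishes at t = 0 and at t = T_j(u) (for j = 0, 1); and (b) F₀(u, T₀(u)) = F₁(u, 0) for every u ∈ U. Then there exists a C∞ map G : U × ℝ → ℝ^N such that for every u ∈ U: G(u, t) = F₀(u, t) whenever 0 ≤ t ≤ T₀(u), and G(u, t) = F₁(u, t − T₀(u)) whenever T₀(u) ≤ t ≤ T₀(u) + T₁(u). (This is the analytic core of the lemma asserting that concatenation of smooth families of Moore paths is smooth.) -/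
open scoped Manifold ContDiff Topology
open Set Function Asymptotics

set_option linter.unusedSectionVars false
set_option maxHeartbeats 1600000

universe u v

section Core

variable {E : Type u} [NormedAddCommGroup E] [NormedSpace ℝ E]

/-- Iterated derivative in the `t`-direction. -/
noncomputable def DtOp {F : Type*} [NormedAddCommGroup F] [NormedSpace ℝ F]
    (A : E × ℝ → F) : E × ℝ → F :=
  fun p => deriv (fun s => A (p.1, s)) p.2

noncomputable def clampT (T : E → ℝ) (p : E × ℝ) : ℝ := max 0 (min (T p.1) p.2)

noncomputable def HcOp {F : Type*} [NormedAddCommGroup F] [NormedSpace ℝ F]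
    (T : E → ℝ) (A : E × ℝ → F) : E × ℝ → F :=
  fun p => A (p.1, clampT T p)

/-- Flatness of `A` at the two boundary hypersurfaces. -/
structure FlatOn {F : Type*} [NormedAddCommGroup F] [NormedSpace ℝ F]
    (Ω : Set E) (T : E → ℝ) (V : Set (E × ℝ)) (A : E × ℝ → F) : Prop where
  smooth : ContDiffOn ℝ ∞ A V
  flat0 : ∀ x ∈ Ω, ∀ m : ℕ, 1 ≤ m → DtOp^[m] A (x, 0) = 0
  flatT : ∀ x ∈ Ω, ∀ m : ℕ, 1 ≤ m → DtOp^[m] A (x, T x) = 0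

variable {F : Type v} [NormedAddCommGroup F] [NormedSpace ℝ F]
variable {V : Set (E × ℝ)} {Ω : Set E} {T : E → ℝ}

lemma dtOp_iter_slice (A : E × ℝ → F) (x : E) :
    ∀ (m : ℕ) (t : ℝ), (DtOp^[m] A) (x, t) = deriv^[m] (fun s => A (x, s)) t := by
  intro m
  induction m generalizing A with
  | zero => intro t; rfl
  | succ m ih =>
    intro t
    rw [Function.iterate_succ_apply, Function.iterate_succ_apply]
    exact ih (DtOp A) t

lemma hasDerivAt_slice_s8 {A : E × ℝ → F} (hA : ContDiffOn ℝ ∞ A V) (hV : IsOpen V)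
    {p : E × ℝ} (hp : p ∈ V) :
    HasDerivAt (fun s => A (p.1, s)) (fderiv ℝ A p (0, 1)) p.2 := by
  have hd : HasFDerivAt A (fderiv ℝ A p) p :=
    ((hA.contDiffAt (hV.mem_nhds hp)).differentiableAt (by simp)).hasFDerivAt
  have hc : HasDerivAt (fun s : ℝ => (p.1, s)) ((0 : E), (1 : ℝ)) p.2 := by
    simpa using (HasDerivAt.prodMk (hasDerivAt_const p.2 p.1) (hasDerivAt_id p.2))
  exact hd.comp_hasDerivAt p.2 hc

lemma dtOp_eq_fderiv {A : E × ℝ → F} (hA : ContDiffOn ℝ ∞ A V) (hV : IsOpen V)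
    {p : E × ℝ} (hp : p ∈ V) :
    DtOp A p = fderiv ℝ A p (0, 1) :=
  (hasDerivAt_slice_s8 hA hV hp).deriv

lemma contDiffOn_fderiv {A : E × ℝ → F} (hA : ContDiffOn ℝ ∞ A V) (hV : IsOpen V) :
    ContDiffOn ℝ ∞ (fderiv ℝ A) V :=
  hA.fderiv_of_isOpen hV (by simp)

lemma contDiffOn_dtOp {A : E × ℝ → F} (hA : ContDiffOn ℝ ∞ A V) (hV : IsOpen V) :
    ContDiffOn ℝ ∞ (DtOp A) V := by
  have h1 : ContDiffOn ℝ ∞ (fun p => fderiv ℝ A p (0, 1)) V :=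
    (ContinuousLinearMap.apply ℝ F ((0 : E), (1 : ℝ))).contDiff.comp_contDiffOn
      (contDiffOn_fderiv hA hV)
  exact h1.congr fun p hp => dtOp_eq_fderiv hA hV hp

lemma dtOp_congr {A B : E × ℝ → F} (hV : IsOpen V) (h : EqOn A B V) :
    EqOn (DtOp A) (DtOp B) V := by
  intro p hp
  have hs : {s : ℝ | (p.1, s) ∈ V} ∈ nhds p.2 := by
    have hc : Continuous fun s : ℝ => (p.1, s) := by fun_prop
    exact hc.continuousAt.preimage_mem_nhds (hV.mem_nhds hp)
  have heq : (fun s => A (p.1, s)) =ᶠ[nhds p.2] (fun s => B (p.1, s)) :=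
    Filter.eventually_of_mem hs fun s hs' => h hs'
  exact heq.deriv_eq

lemma dtOp_iter_congr {A B : E × ℝ → F} (hV : IsOpen V) (h : EqOn A B V) (m : ℕ) :
    EqOn (DtOp^[m] A) (DtOp^[m] B) V := by
  induction m with
  | zero => exact h
  | succ m ih =>
    rw [Function.iterate_succ_apply', Function.iterate_succ_apply']
    exact dtOp_congr hV ih

lemma contDiffOn_dtOp_iter {A : E × ℝ → F} (hA : ContDiffOn ℝ ∞ A V) (hV : IsOpen V) (m : ℕ) :
    ContDiffOn ℝ ∞ (DtOp^[m] A) V := by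
  induction m generalizing A with
  | zero => exact hA
  | succ m ih => rw [Function.iterate_succ_apply]; exact ih (contDiffOn_dtOp hA hV)

lemma dtOp_fderiv_comm {A : E × ℝ → F} (hA : ContDiffOn ℝ ∞ A V) (hV : IsOpen V) :
    EqOn (DtOp (fderiv ℝ A)) (fderiv ℝ (DtOp A)) V := by
  intro p hp
  have hA' : ContDiffOn ℝ ∞ (fderiv ℝ A) V := contDiffOn_fderiv hA hV
  have hdiff' : DifferentiableAt ℝ (fderiv ℝ A) p :=
    (hA'.contDiffAt (hV.mem_nhds hp)).differentiableAt (by simp)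
  set f'' := fderiv ℝ (fderiv ℝ A) p with hf''
  have h1 : DtOp (fderiv ℝ A) p = f'' (0, 1) := dtOp_eq_fderiv hA' hV hp
  set L01 := ContinuousLinearMap.apply ℝ F ((0 : E), (1 : ℝ)) with hL01
  have h2 : fderiv ℝ (DtOp A) p = L01.comp f'' := by
    have heq : DtOp A =ᶠ[nhds p] (fun q => L01 (fderiv ℝ A q)) := by
      refine Filter.eventually_of_mem (hV.mem_nhds hp) fun q hq => ?_
      exact dtOp_eq_fderiv hA hV hq
    rw [heq.fderiv_eq]
    exact (L01.hasFDerivAt.comp p hdiff'.hasFDerivAt).fderiv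
  rw [h1, h2]
  refine ContinuousLinearMap.ext fun v => ?_
  have hsymm : ∀ v w, f'' v w = f'' w v := by
    intro v w
    refine second_derivative_symmetric_of_eventually_of_real (f := A) ?_ hdiff'.hasFDerivAt v w
    refine Filter.eventually_of_mem (hV.mem_nhds hp) fun q hq => ?_
    exact ((hA.contDiffAt (hV.mem_nhds hq)).differentiableAt (by simp)).hasFDerivAt
  simpa [L01] using hsymm (0, 1) v

lemma dtOp_iter_fderiv_comm {A : E × ℝ → F} (hA : ContDiffOn ℝ ∞ A V) (hV : IsOpen V) (m : ℕ) :
    EqOn (DtOp^[m] (fderiv ℝ A)) (fderiv ℝ (DtOp^[m] A)) V := by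
  induction m generalizing A with
  | zero => exact fun p _ => rfl
  | succ m ih =>
    intro p hp
    rw [Function.iterate_succ_apply, Function.iterate_succ_apply]
    calc DtOp^[m] (DtOp (fderiv ℝ A)) p
        = DtOp^[m] (fderiv ℝ (DtOp A)) p :=
          dtOp_iter_congr hV (dtOp_fderiv_comm hA hV) m hp
      _ = fderiv ℝ (DtOp^[m] (DtOp A)) p := ih (contDiffOn_dtOp hA hV) hp

lemma fderiv_eq_zero_of_curve {B : E × ℝ → F} (hB : ContDiffOn ℝ ∞ B V) (hV : IsOpen V)
    (hΩ : IsOpen Ω) {g : E → ℝ} {x : E} (hx : x ∈ Ω) {dg : E →L[ℝ] ℝ}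
    (hg : HasFDerivAt g dg x) (hzero : ∀ y ∈ Ω, B (y, g y) = 0)
    (hp : (x, g x) ∈ V) (hDt : DtOp B (x, g x) = 0) :
    fderiv ℝ B (x, g x) = 0 := by
  set L := fderiv ℝ B (x, g x) with hL
  have hBd : HasFDerivAt B L (x, g x) :=
    ((hB.contDiffAt (hV.mem_nhds hp)).differentiableAt (by simp)).hasFDerivAt
  have hcurve : HasFDerivAt (fun y : E => (y, g y)) ((ContinuousLinearMap.id ℝ E).prod dg) x :=
    HasFDerivAt.prodMk (hasFDerivAt_id x) hg
  have hcomp : HasFDerivAt (fun y => B (y, g y))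
      (L.comp ((ContinuousLinearMap.id ℝ E).prod dg)) x := hBd.comp x hcurve
  have hzero' : (fun y => B (y, g y)) =ᶠ[nhds x] (fun _ => (0 : F)) :=
    Filter.eventually_of_mem (hΩ.mem_nhds hx) hzero
  have h0 : HasFDerivAt (fun _ : E => (0 : F))
      (L.comp ((ContinuousLinearMap.id ℝ E).prod dg)) x :=
    hcomp.congr_of_eventuallyEq hzero'.symm
  have hc : L.comp ((ContinuousLinearMap.id ℝ E).prod dg) = 0 := by
    have h1 := h0.fderiv
    rw [fderiv_fun_const] at h1
    simpa using h1.symm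
  have hdir : L (0, 1) = 0 := by
    rw [← dtOp_eq_fderiv hB hV hp]; exact hDt
  refine ContinuousLinearMap.ext fun v => ?_
  have hv : (v.1, v.2) = (v.1, dg v.1) + (v.2 - dg v.1) • ((0 : E), (1 : ℝ)) := by
    simp [Prod.ext_iff]
  calc L v = L (v.1, v.2) := by rfl
    _ = L ((v.1, dg v.1) + (v.2 - dg v.1) • ((0 : E), (1 : ℝ))) := by rw [← hv]
    _ = L (v.1, dg v.1) + (v.2 - dg v.1) • L (0, 1) := by rw [map_add, map_smul]
    _ = 0 := by
        have h2 : L (v.1, dg v.1) = 0 := by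
          have h3 := congrArg (fun (M : E →L[ℝ] F) => M v.1) hc
          simpa using h3
        simp [h2, hdir]

lemma flatOn_fderiv (hΩ : IsOpen Ω) (hV : IsOpen V) (hT : ContDiffOn ℝ ∞ T Ω)
    (hT0 : ∀ x ∈ Ω, 0 ≤ T x)
    (hslab : ∀ x ∈ Ω, ∀ t : ℝ, 0 ≤ t → t ≤ T x → (x, t) ∈ V)
    {A : E × ℝ → F} (hA : FlatOn Ω T V A) :
    FlatOn Ω T V (fderiv ℝ A) := by
  have hsm := hA.smooth
  constructor
  · exact contDiffOn_fderiv hsm hV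
  · intro x hx m hm
    have hmem : (x, (0 : ℝ)) ∈ V := hslab x hx 0 le_rfl (hT0 x hx)
    rw [dtOp_iter_fderiv_comm hsm hV m hmem]
    have h0 : (x, (0 : ℝ)) = (x, (fun _ : E => (0 : ℝ)) x) := rfl
    rw [h0]
    refine fderiv_eq_zero_of_curve (contDiffOn_dtOp_iter hsm hV m) hV hΩ hx
      (hasFDerivAt_const 0 x) (fun y hy => hA.flat0 y hy m hm) hmem ?_
    have h1 := hA.flat0 x hx (m + 1) (by omega)
    rwa [Function.iterate_succ_apply'] at h1
  · intro x hx m hm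
    have hmem : (x, T x) ∈ V := hslab x hx (T x) (hT0 x hx) le_rfl
    rw [dtOp_iter_fderiv_comm hsm hV m hmem]
    have hTd : HasFDerivAt T (fderiv ℝ T x) x :=
      ((hT.contDiffAt (hΩ.mem_nhds hx)).differentiableAt (by simp)).hasFDerivAt
    refine fderiv_eq_zero_of_curve (contDiffOn_dtOp_iter hsm hV m) hV hΩ hx
      hTd (fun y hy => hA.flatT y hy m hm) hmem ?_
    have h1 := hA.flatT x hx (m + 1) (by omega)
    rwa [Function.iterate_succ_apply'] at h1

section cl
variable (T)
lemma clampT_nonneg (p : E × ℝ) : 0 ≤ clampT T p := le_max_left _ _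
lemma clampT_le_T {p : E × ℝ} (h : 0 ≤ T p.1) : clampT T p ≤ T p.1 :=
  max_le h (min_le_left _ _)
end cl

lemma clampT_eq_zero_of_nonpos {p : E × ℝ} (h : p.2 ≤ 0) : clampT T p = 0 :=
  max_eq_left (le_trans (min_le_right _ _) h)

lemma clampT_eq_self {p : E × ℝ} (h0 : 0 ≤ p.2) (hT : p.2 ≤ T p.1) : clampT T p = p.2 := by
  rw [clampT, min_eq_right hT, max_eq_right h0]

lemma clampT_eq_T {p : E × ℝ} (h0 : 0 ≤ T p.1) (hT : T p.1 ≤ p.2) : clampT T p = T p.1 := by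
  rw [clampT, min_eq_left hT, max_eq_right h0]

/-- The key analytic step. -/
lemma hasFDerivAt_HcOp (hΩ : IsOpen Ω) (hV : IsOpen V) (hT : ContDiffOn ℝ ∞ T Ω)
    (hT0 : ∀ x ∈ Ω, 0 ≤ T x)
    (hslab : ∀ x ∈ Ω, ∀ t : ℝ, 0 ≤ t → t ≤ T x → (x, t) ∈ V)
    {A : E × ℝ → F} (hA : FlatOn Ω T V A) {p : E × ℝ} (hp : p.1 ∈ Ω) :
    HasFDerivAt (HcOp T A) (fderiv ℝ A (p.1, clampT T p)) p := by
  obtain ⟨x₀, t₀⟩ := p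
  simp only at hp
  have hsm := hA.smooth
  have hT0' : 0 ≤ T x₀ := hT0 x₀ hp
  have hmemV : ∀ {y : E}, y ∈ Ω → ∀ {σ : ℝ}, 0 ≤ σ → σ ≤ T y → (y, σ) ∈ V :=
    fun hy _ h1 h2 => hslab _ hy _ h1 h2
  have hflat0 : ∀ x ∈ Ω, DtOp A (x, 0) = 0 := by
    intro x hx; have := hA.flat0 x hx 1 le_rfl; rwa [Function.iterate_one] at this
  have hflatT : ∀ x ∈ Ω, DtOp A (x, T x) = 0 := by
    intro x hx; have := hA.flatT x hx 1 le_rfl; rwa [Function.iterate_one] at this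
  set j0 : E × ℝ →L[ℝ] E × ℝ := (ContinuousLinearMap.fst ℝ E ℝ).prod 0 with hj0
  have hTd : HasFDerivAt T (fderiv ℝ T x₀) x₀ :=
    ((hT.contDiffAt (hΩ.mem_nhds hp)).differentiableAt (by simp)).hasFDerivAt
  set dT : E →L[ℝ] ℝ := fderiv ℝ T x₀
  set j1 : E × ℝ →L[ℝ] E × ℝ :=
    (ContinuousLinearMap.fst ℝ E ℝ).prod (dT.comp (ContinuousLinearMap.fst ℝ E ℝ)) with hj1
  have hAd : ∀ {q : E × ℝ}, q ∈ V → HasFDerivAt A (fderiv ℝ A q) q := fun hq =>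
    ((hsm.contDiffAt (hV.mem_nhds hq)).differentiableAt (by simp)).hasFDerivAt
  have hext0 : ∀ {L : E × ℝ →L[ℝ] F}, L (0, 1) = 0 → L.comp j0 = L := by
    intro L hL
    refine ContinuousLinearMap.ext fun v => ?_
    have hv : (v.1, v.2) = (v.1, (0 : ℝ)) + v.2 • ((0 : E), (1 : ℝ)) := by
      simp [Prod.ext_iff]
    calc L (j0 v) = L (v.1, 0) := by simp [hj0]
      _ = L (v.1, 0) + v.2 • L (0, 1) := by simp [hL]
      _ = L ((v.1, (0:ℝ)) + v.2 • ((0 : E), (1:ℝ))) := by rw [map_add, map_smul]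
      _ = L v := by rw [← hv]
  have hext1 : ∀ {L : E × ℝ →L[ℝ] F}, L (0, 1) = 0 → L.comp j1 = L := by
    intro L hL
    refine ContinuousLinearMap.ext fun v => ?_
    have hv : (v.1, v.2) = (v.1, dT v.1) + (v.2 - dT v.1) • ((0 : E), (1 : ℝ)) := by
      simp [Prod.ext_iff]
    calc L (j1 v) = L (v.1, dT v.1) := by simp [hj1]
      _ = L (v.1, dT v.1) + (v.2 - dT v.1) • L (0, 1) := by simp [hL]
      _ = L ((v.1, dT v.1) + (v.2 - dT v.1) • ((0 : E), (1:ℝ))) := by rw [map_add, map_smul]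
      _ = L v := by rw [← hv]
  -- the open region sets
  have hopenO : ∀ s : Set ℝ, IsOpen s → IsOpen {q : E × ℝ | q.1 ∈ Ω ∧ T q.1 - q.2 ∈ s} := by
    intro s hs
    have hcont : ContinuousOn (fun q : E × ℝ => T q.1 - q.2) (Ω ×ˢ (univ : Set ℝ)) :=
      (hT.continuousOn.comp continuousOn_fst fun q hq => hq.1).sub continuousOn_snd
    have h2 := hcont.isOpen_inter_preimage (hΩ.prod isOpen_univ) hs
    convert h2 using 1
    ext q
    simp only [mem_setOf_eq, mem_inter_iff, mem_prod, mem_univ, and_true, mem_preimage]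
  rcases lt_trichotomy t₀ 0 with ht | ht | ht
  · -- t₀ < 0 : locally A (x, 0)
    have hc : clampT T (x₀, t₀) = 0 := clampT_eq_zero_of_nonpos ht.le
    rw [hc]
    have hq₀ : ((x₀ : E), (0 : ℝ)) ∈ V := hmemV hp le_rfl hT0'
    have hdir : fderiv ℝ A (x₀, (0:ℝ)) (0, 1) = 0 := by
      rw [← dtOp_eq_fderiv hsm hV hq₀]; exact hflat0 x₀ hp
    have hf₁ : HasFDerivAt (fun q : E × ℝ => A (q.1, (0 : ℝ)))
        ((fderiv ℝ A (x₀, (0:ℝ))).comp j0) (x₀, t₀) := by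
      have := (hAd hq₀).comp (x₀, t₀) (j0.hasFDerivAt (x := (x₀, t₀)))
      simpa [Function.comp_def, hj0] using this
    rw [hext0 hdir] at hf₁
    refine hf₁.congr_of_eventuallyEq ?_
    have hopen : IsOpen {q : E × ℝ | q.2 < 0} := isOpen_Iio.preimage continuous_snd
    refine Filter.eventually_of_mem (hopen.mem_nhds ht) fun q hq => ?_
    simp only [HcOp, clampT_eq_zero_of_nonpos (le_of_lt hq)]
  · -- t₀ = 0 : boundary case
    subst ht
    have hc : clampT T (x₀, (0:ℝ)) = 0 := clampT_eq_zero_of_nonpos le_rfl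
    rw [hc]
    have hq₀ : ((x₀ : E), (0 : ℝ)) ∈ V := hmemV hp le_rfl hT0'
    have hdir : fderiv ℝ A (x₀, (0:ℝ)) (0, 1) = 0 := by
      rw [← dtOp_eq_fderiv hsm hV hq₀]; exact hflat0 x₀ hp
    have hf₁ : HasFDerivAt (fun q : E × ℝ => A (q.1, (0 : ℝ)))
        ((fderiv ℝ A (x₀, (0:ℝ))).comp j0) (x₀, (0:ℝ)) := by
      have := (hAd hq₀).comp (x₀, (0:ℝ)) (j0.hasFDerivAt (x := (x₀, (0:ℝ))))
      simpa [Function.comp_def, hj0] using this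
    rw [hext0 hdir] at hf₁
    have hδ : HasFDerivAt (fun q : E × ℝ => HcOp T A q - A (q.1, (0:ℝ)))
        (0 : E × ℝ →L[ℝ] F) (x₀, (0:ℝ)) := by
      rw [hasFDerivAt_iff_isLittleO_nhds_zero, isLittleO_iff]
      intro c hc'
      have hcont : ContinuousAt (DtOp A) (x₀, (0:ℝ)) :=
        (contDiffOn_dtOp hsm hV).continuousOn.continuousAt (hV.mem_nhds hq₀)
      have hev : ∀ᶠ r in 𝓝 ((x₀ : E), (0:ℝ)), ‖DtOp A r‖ < c := by
        have h0 : DtOp A (x₀, (0:ℝ)) = 0 := hflat0 x₀ hp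
        have := hcont.eventually_mem (by rw [h0]; exact Metric.ball_mem_nhds (0 : F) hc')
        exact this.mono fun r hr => by simpa using hr
      rw [Metric.eventually_nhds_iff] at hev
      obtain ⟨δ, hδpos, hδball⟩ := hev
      have hevΩ : ∀ᶠ h : E × ℝ in 𝓝 0, (x₀ + h.1) ∈ Ω := by
        have hcont2 : Continuous fun h : E × ℝ => x₀ + h.1 := by fun_prop
        exact hcont2.continuousAt.eventually_mem (by simpa using hΩ.mem_nhds hp)
      have hevball : ∀ᶠ h : E × ℝ in 𝓝 0, ‖h‖ < δ := by
        filter_upwards [Metric.ball_mem_nhds (0 : E × ℝ) hδpos] with h hh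
        simpa [mem_ball_zero_iff] using hh
      filter_upwards [hevΩ, hevball] with h hΩh hballh
      set y := x₀ + h.1 with hy
      set s := (0:ℝ) + h.2 with hs
      have hys : ((x₀, (0:ℝ)) + h) = (y, s) := rfl
      rw [hys]
      have hTy : 0 ≤ T y := hT0 y hΩh
      set cl := clampT T (y, s) with hcl
      have hcl0 : 0 ≤ cl := clampT_nonneg T _
      have hclT : cl ≤ T y := clampT_le_T T hTy
      have hsh : |s| ≤ ‖h‖ := by
        rw [hs, zero_add]
        simpa [Real.norm_eq_abs] using norm_snd_le h
      have hcls : cl ≤ |s| := by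
        have h1 : cl ≤ max 0 s := max_le_max le_rfl (min_le_right _ _)
        exact h1.trans (max_le (abs_nonneg s) (le_abs_self s))
      have hK : ∀ σ ∈ Icc (0:ℝ) cl, (y, σ) ∈ V := fun σ hσ =>
        hmemV hΩh hσ.1 (hσ.2.trans hclT)
      have hbound : ∀ σ ∈ Icc (0:ℝ) cl, ‖DtOp A (y, σ)‖ ≤ c := by
        intro σ hσ
        refine (hδball ?_).le
        rw [Prod.dist_eq]
        have h1 : dist y x₀ < δ := by
          have h2 : dist y x₀ ≤ ‖h‖ := by
            rw [hy, dist_eq_norm, add_sub_cancel_left]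
            exact norm_fst_le h
          linarith
        have h2 : dist σ 0 < δ := by
          have h3 : |σ| ≤ |s| := by
            rw [abs_of_nonneg hσ.1]; exact hσ.2.trans hcls
          rw [Real.dist_eq, sub_zero]
          linarith
        exact max_lt h1 h2
      have hMVT : ‖A (y, cl) - A (y, 0)‖ ≤ c * ‖cl - 0‖ := by
        refine Convex.norm_image_sub_le_of_norm_hasDerivWithin_le
          (f := fun σ => A (y, σ)) (f' := fun σ => DtOp A (y, σ)) ?_ hbound (convex_Icc _ _)
          ⟨le_rfl, hcl0⟩ ⟨hcl0, le_rfl⟩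
        intro σ hσ
        have hd := hasDerivAt_slice_s8 hsm hV (hK σ hσ)
        rw [← dtOp_eq_fderiv hsm hV (hK σ hσ)] at hd
        exact hd.hasDerivWithinAt
      have key : ‖A (y, cl) - A (y, 0)‖ ≤ c * ‖h‖ := by
        refine hMVT.trans (mul_le_mul_of_nonneg_left ?_ hc'.le)
        rw [sub_zero, Real.norm_eq_abs, abs_of_nonneg hcl0]
        exact hcls.trans hsh
      have hp0 : HcOp T A (x₀, (0:ℝ)) - A (x₀, (0:ℝ)) = 0 := by
        simp [HcOp, hc]
      calc ‖HcOp T A (y, s) - A ((y, s).1, 0) -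
            (HcOp T A (x₀, (0:ℝ)) - A ((x₀, (0:ℝ)).1, 0)) -
            (0 : E × ℝ →L[ℝ] F) h‖
          = ‖A (y, cl) - A (y, 0)‖ := by
            simp only [ContinuousLinearMap.zero_apply, sub_zero]
            rw [show HcOp T A (x₀, (0:ℝ)) - A ((x₀, (0:ℝ)).1, 0) = 0 from hp0, sub_zero]
            rfl
        _ ≤ c * ‖h‖ := key
    have hsum := hf₁.fun_add hδ
    have hfun : (fun q : E × ℝ => A (q.1, (0:ℝ)) + (HcOp T A q - A (q.1, (0:ℝ))))
        = HcOp T A := by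
      funext q; rw [add_sub_cancel]
    rw [hfun, add_zero] at hsum
    exact hsum
  · -- t₀ > 0
    rcases lt_trichotomy t₀ (T x₀) with hlt | heq | hgt
    · -- interior
      have hc : clampT T (x₀, t₀) = t₀ := clampT_eq_self ht.le hlt.le
      rw [hc]
      have hq : ((x₀ : E), t₀) ∈ V := hmemV hp ht.le hlt.le
      refine (hAd hq).congr_of_eventuallyEq ?_
      have hopen1 : IsOpen {q : E × ℝ | q.1 ∈ Ω ∧ T q.1 - q.2 ∈ Ioi 0} := hopenO _ isOpen_Ioi
      have hopen2 : IsOpen {q : E × ℝ | 0 < q.2} := isOpen_Ioi.preimage continuous_snd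
      have hmem : ({q : E × ℝ | q.1 ∈ Ω ∧ T q.1 - q.2 ∈ Ioi 0} ∩ {q | 0 < q.2}) ∈
          𝓝 ((x₀ : E), t₀) := by
        refine (hopen1.inter hopen2).mem_nhds ?_
        exact ⟨⟨hp, by simpa using sub_pos.mpr hlt⟩, ht⟩
      refine Filter.eventually_of_mem hmem fun q hq' => ?_
      have : clampT T q = q.2 := clampT_eq_self hq'.2.le (by have := hq'.1.2; simp at this; linarith)
      simp only [HcOp, this]
    · -- t₀ = T x₀, t₀ > 0 : right boundary
      subst heq
      have hc : clampT T (x₀, T x₀) = T x₀ := clampT_eq_T hT0' le_rfl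
      rw [hc]
      have hqT : ((x₀ : E), T x₀) ∈ V := hmemV hp hT0' le_rfl
      have hdir : fderiv ℝ A (x₀, T x₀) (0, 1) = 0 := by
        rw [← dtOp_eq_fderiv hsm hV hqT]; exact hflatT x₀ hp
      have hmfd : HasFDerivAt (fun q : E × ℝ => (q.1, T q.1)) j1 (x₀, T x₀) := by
        refine HasFDerivAt.prodMk (hasFDerivAt_fst) ?_
        exact hTd.comp _ (hasFDerivAt_fst)
      have hf₁ : HasFDerivAt (fun q : E × ℝ => A (q.1, T q.1))
          ((fderiv ℝ A (x₀, T x₀)).comp j1) (x₀, T x₀) := by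
        have := (hAd hqT).comp ((x₀ : E), T x₀) hmfd
        simpa [Function.comp_def] using this
      rw [hext1 hdir] at hf₁
      have hδ : HasFDerivAt (fun q : E × ℝ => HcOp T A q - A (q.1, T q.1))
          (0 : E × ℝ →L[ℝ] F) (x₀, T x₀) := by
        rw [hasFDerivAt_iff_isLittleO_nhds_zero, isLittleO_iff]
        intro c hc'
        obtain ⟨C, hCpos, hCb⟩ := hTd.isBigO_sub.exists_pos
        have hCb' : ∀ᶠ y' in 𝓝 x₀, ‖T y' - T x₀‖ ≤ C * ‖y' - x₀‖ := hCb.bound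
        set ε := c / (C + 1) with hε
        have hεpos : 0 < ε := div_pos hc' (by linarith)
        have hcont : ContinuousAt (DtOp A) (x₀, T x₀) :=
          (contDiffOn_dtOp hsm hV).continuousOn.continuousAt (hV.mem_nhds hqT)
        have hev : ∀ᶠ r in 𝓝 ((x₀ : E), T x₀), ‖DtOp A r‖ < ε := by
          have h0 : DtOp A (x₀, T x₀) = 0 := hflatT x₀ hp
          have := hcont.eventually_mem (by rw [h0]; exact Metric.ball_mem_nhds (0 : F) hεpos)
          exact this.mono fun r hr => by simpa using hr
        rw [Metric.eventually_nhds_iff] at hev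
        obtain ⟨δ, hδpos, hδball⟩ := hev
        have hevΩ : ∀ᶠ h : E × ℝ in 𝓝 0, (x₀ + h.1) ∈ Ω := by
          have hcont2 : Continuous fun h : E × ℝ => x₀ + h.1 := by fun_prop
          exact hcont2.continuousAt.eventually_mem (by simpa using hΩ.mem_nhds hp)
        have htend : Filter.Tendsto (fun h : E × ℝ => x₀ + h.1) (𝓝 0) (𝓝 x₀) := by
          have h1 : Filter.Tendsto (fun h : E × ℝ => x₀ + h.1) (𝓝 0)
              (𝓝 (x₀ + (0 : E × ℝ).1)) := (continuous_const.add continuous_fst).tendsto 0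
          simpa using h1
        have hevC : ∀ᶠ h : E × ℝ in 𝓝 0, ‖T (x₀ + h.1) - T x₀‖ ≤ C * ‖h.1‖ := by
          have h1 := htend.eventually hCb'
          exact h1.mono fun h hh => by simpa [add_sub_cancel_left] using hh
        have hevball : ∀ᶠ h : E × ℝ in 𝓝 0,
            ‖h‖ < min (δ / (2 * (C + 1))) (T x₀) := by
          have hmin : (0:ℝ) < min (δ / (2 * (C + 1))) (T x₀) := lt_min (by positivity) ht
          filter_upwards [Metric.ball_mem_nhds (0 : E × ℝ) hmin] with h hh
          rw [mem_ball_zero_iff] at hh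
          exact hh
        filter_upwards [hevΩ, hevC, hevball] with h hΩh hCh hballh
        obtain ⟨hball1, hball2⟩ := lt_min_iff.mp hballh
        set y := x₀ + h.1 with hy
        set s := T x₀ + h.2 with hs
        have hys : ((x₀, T x₀) + h) = (y, s) := rfl
        rw [hys]
        have hTy : 0 ≤ T y := hT0 y hΩh
        have hh1 : ‖h.1‖ ≤ ‖h‖ := norm_fst_le h
        have hh2 : |h.2| ≤ ‖h‖ := by simpa [Real.norm_eq_abs] using norm_snd_le h
        have hCd : |T y - T x₀| ≤ C * ‖h‖ := by
          refine le_trans ?_ (mul_le_mul_of_nonneg_left hh1 hCpos.le)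
          simpa [Real.norm_eq_abs] using hCh
        have hδhalf : δ / 2 < δ := by linarith
        have hTyd : |T y - T x₀| < δ / 2 := by
          have h1 : C * ‖h‖ < C * (δ / (2 * (C + 1))) :=
            mul_lt_mul_of_pos_left hball1 hCpos
          have h2 : C * (δ / (2 * (C + 1))) ≤ δ / 2 := by
            rw [mul_div_assoc', div_le_div_iff₀ (by positivity) (by norm_num)]
            nlinarith
          calc |T y - T x₀| ≤ C * ‖h‖ := hCd
            _ < δ / 2 := by linarith
        have hsd : |s - T x₀| < δ / 2 := by
          rw [hs]
          have : |T x₀ + h.2 - T x₀| = |h.2| := by ring_nf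
          rw [this]
          calc |h.2| ≤ ‖h‖ := hh2
            _ < δ / (2 * (C + 1)) := hball1
            _ ≤ δ / 2 := by
                rw [div_le_div_iff₀ (by positivity) (by norm_num)]
                nlinarith
        have hspos : 0 < s := by
          rw [hs]
          have : -(T x₀) < h.2 := by
            have := abs_lt.mp (lt_of_le_of_lt hh2 hball2)
            linarith [this.1]
          linarith
        set cl := clampT T (y, s) with hcl
        have hclmin : cl = min (T y) s := by
          rw [hcl, clampT]
          exact max_eq_right (le_min hTy hspos.le)
        have hcl0 : 0 ≤ cl := clampT_nonneg T _
        have hclTy : cl ≤ T y := by rw [hclmin]; exact min_le_left _ _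
        have hcldist : |cl - T x₀| < δ / 2 := by
          rw [hclmin]
          rcases min_cases (T y) s with ⟨hm, _⟩ | ⟨hm, _⟩ <;> rw [hm]
          · exact hTyd
          · exact hsd
        have hK : ∀ σ ∈ Icc cl (T y), (y, σ) ∈ V := fun σ hσ =>
          hmemV hΩh (hcl0.trans hσ.1) hσ.2
        have hbound : ∀ σ ∈ Icc cl (T y), ‖DtOp A (y, σ)‖ ≤ ε := by
          intro σ hσ
          refine (hδball ?_).le
          rw [Prod.dist_eq]
          have h1 : dist y x₀ < δ := by
            have h2 : dist y x₀ ≤ ‖h‖ := by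
              rw [hy, dist_eq_norm, add_sub_cancel_left]
              exact norm_fst_le h
            have : ‖h‖ < δ / (2 * (C+1)) := hball1
            have h3 : δ / (2 * (C+1)) ≤ δ := by
              rw [div_le_iff₀ (by positivity)]
              nlinarith
            linarith
          have h2 : dist σ (T x₀) < δ := by
            rw [Real.dist_eq]
            have hlow : -(δ/2) < σ - T x₀ := by
              have := neg_lt_of_abs_lt hcldist
              have h4 := hσ.1
              linarith
            have hhigh : σ - T x₀ < δ / 2 := by
              have := lt_of_abs_lt hTyd
              have h4 := hσ.2
              linarith
            rw [abs_lt]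
            constructor <;> linarith
          exact max_lt h1 h2
        have hKcl : cl ∈ Icc cl (T y) := ⟨le_rfl, hclTy⟩
        have hKTy : T y ∈ Icc cl (T y) := ⟨hclTy, le_rfl⟩
        have hMVT : ‖A (y, cl) - A (y, T y)‖ ≤ ε * ‖cl - T y‖ := by
          refine Convex.norm_image_sub_le_of_norm_hasDerivWithin_le
            (f := fun σ => A (y, σ)) (f' := fun σ => DtOp A (y, σ)) ?_ hbound (convex_Icc _ _)
            hKTy hKcl
          intro σ hσ
          have hd := hasDerivAt_slice_s8 hsm hV (hK σ hσ)
          rw [← dtOp_eq_fderiv hsm hV (hK σ hσ)] at hd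
          exact hd.hasDerivWithinAt
        have hclTle : ‖cl - T y‖ ≤ (C + 1) * ‖h‖ := by
          rw [Real.norm_eq_abs]
          have h5 : |cl - T y| ≤ |T y - s| := by
            rw [hclmin]
            rcases min_cases (T y) s with ⟨hm, hle⟩ | ⟨hm, hle⟩ <;> rw [hm]
            · simp [abs_nonneg]
            · rw [abs_sub_comm]
          have h6 : |T y - s| ≤ |T y - T x₀| + |T x₀ - s| := abs_sub_le _ _ _
          have h7 : |T x₀ - s| = |h.2| := by rw [hs]; ring_nf; exact abs_neg _
          have h8 : |T y - T x₀| ≤ C * ‖h‖ := hCd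
          rw [h7] at h6
          have : |T y - s| ≤ C * ‖h‖ + ‖h‖ := by linarith
          nlinarith
        have key : ‖A (y, cl) - A (y, T y)‖ ≤ c * ‖h‖ := by
          refine hMVT.trans ?_
          have : ε * ‖cl - T y‖ ≤ ε * ((C + 1) * ‖h‖) :=
            mul_le_mul_of_nonneg_left hclTle hεpos.le
          have hεC : ε * (C + 1) = c := by
            rw [hε]; field_simp
          nlinarith [norm_nonneg h]
        have hp0 : HcOp T A (x₀, T x₀) - A (x₀, T x₀) = 0 := by
          simp [HcOp, hc]
        calc ‖HcOp T A (y, s) - A ((y, s).1, T (y, s).1) -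
              (HcOp T A (x₀, T x₀) - A ((x₀, T x₀).1, T (x₀, T x₀).1)) -
              (0 : E × ℝ →L[ℝ] F) h‖
            = ‖A (y, cl) - A (y, T y)‖ := by
              simp only [ContinuousLinearMap.zero_apply, sub_zero]
              rw [show HcOp T A (x₀, T x₀) - A ((x₀, T x₀).1, T (x₀, T x₀).1) = 0 from hp0,
                sub_zero]
              rfl
          _ ≤ c * ‖h‖ := key
      have hsum := hf₁.fun_add hδ
      have hfun : (fun q : E × ℝ => A (q.1, T q.1) + (HcOp T A q - A (q.1, T q.1)))
          = HcOp T A := by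
        funext q; rw [add_sub_cancel]
      rw [hfun, add_zero] at hsum
      exact hsum
    · -- t₀ > T x₀ : locally A (x, T x)
      have hc : clampT T (x₀, t₀) = T x₀ := clampT_eq_T hT0' hgt.le
      rw [hc]
      have hqT : ((x₀ : E), T x₀) ∈ V := hmemV hp hT0' le_rfl
      have hdir : fderiv ℝ A (x₀, T x₀) (0, 1) = 0 := by
        rw [← dtOp_eq_fderiv hsm hV hqT]; exact hflatT x₀ hp
      have hmfd : HasFDerivAt (fun q : E × ℝ => (q.1, T q.1)) j1 (x₀, t₀) := by
        refine HasFDerivAt.prodMk (hasFDerivAt_fst) ?_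
        exact hTd.comp _ (hasFDerivAt_fst)
      have hf₁ : HasFDerivAt (fun q : E × ℝ => A (q.1, T q.1))
          ((fderiv ℝ A (x₀, T x₀)).comp j1) (x₀, t₀) := by
        have := (hAd hqT).comp ((x₀ : E), t₀) hmfd
        simpa [Function.comp_def] using this
      rw [hext1 hdir] at hf₁
      refine hf₁.congr_of_eventuallyEq ?_
      have hopen1 : IsOpen {q : E × ℝ | q.1 ∈ Ω ∧ T q.1 - q.2 ∈ Iio 0} := hopenO _ isOpen_Iio
      have hmem : {q : E × ℝ | q.1 ∈ Ω ∧ T q.1 - q.2 ∈ Iio 0} ∈ 𝓝 ((x₀ : E), t₀) := by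
        refine hopen1.mem_nhds ?_
        exact ⟨hp, by simpa using sub_neg.mpr hgt⟩
      refine Filter.eventually_of_mem hmem fun q hq' => ?_
      have hq'2 : T q.1 < q.2 := by have := hq'.2; simpa [sub_neg] using this
      simp only [HcOp, clampT_eq_T (hT0 _ hq'.1) hq'2.le]

lemma continuousOn_HcOp (hT : ContDiffOn ℝ ∞ T Ω) (hT0 : ∀ x ∈ Ω, 0 ≤ T x)
    (hslab : ∀ x ∈ Ω, ∀ t : ℝ, 0 ≤ t → t ≤ T x → (x, t) ∈ V)
    {A : E × ℝ → F} (hA : ContDiffOn ℝ ∞ A V) :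
    ContinuousOn (HcOp T A) (Ω ×ˢ (univ : Set ℝ)) := by
  have hclcont : ContinuousOn (fun q : E × ℝ => (q.1, clampT T q)) (Ω ×ˢ (univ : Set ℝ)) := by
    refine continuousOn_fst.prodMk ?_
    have hmaxc : Continuous fun r : ℝ => max 0 r := continuous_const.max continuous_id
    have hmin : ContinuousOn (fun q : E × ℝ => min (T q.1) q.2) (Ω ×ˢ (univ : Set ℝ)) :=
      continuous_min.comp_continuousOn
        ((hT.continuousOn.comp continuousOn_fst fun q hq => hq.1).prodMk continuousOn_snd)
    exact hmaxc.comp_continuousOn hmin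
  refine hA.continuousOn.comp hclcont fun q hq => ?_
  exact hslab q.1 hq.1 _ (clampT_nonneg T q) (clampT_le_T T (hT0 q.1 hq.1))

lemma contDiffOn_HcOp_nat (hΩ : IsOpen Ω) (hV : IsOpen V) (hT : ContDiffOn ℝ ∞ T Ω)
    (hT0 : ∀ x ∈ Ω, 0 ≤ T x)
    (hslab : ∀ x ∈ Ω, ∀ t : ℝ, 0 ≤ t → t ≤ T x → (x, t) ∈ V) :
    ∀ (n : ℕ) {F : Type (max u v)} [NormedAddCommGroup F] [NormedSpace ℝ F]
    (A : E × ℝ → F), FlatOn Ω T V A → ContDiffOn ℝ n (HcOp T A) (Ω ×ˢ (univ : Set ℝ)) := by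
  intro n
  induction n with
  | zero =>
    intro F _ _ A hA
    rw [show ((0 : ℕ) : WithTop ℕ∞) = 0 from rfl, contDiffOn_zero]
    exact continuousOn_HcOp hT hT0 hslab hA.smooth
  | succ n ih =>
    intro F _ _ A hA
    have hs : IsOpen (Ω ×ˢ (univ : Set ℝ)) := hΩ.prod isOpen_univ
    have hcast : ((n + 1 : ℕ) : WithTop ℕ∞) = (n : WithTop ℕ∞) + 1 := by exact_mod_cast rfl
    rw [hcast, contDiffOn_succ_iff_fderiv_of_isOpen hs]
    refine ⟨?_, ?_, ?_⟩
    · intro p hp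
      exact (hasFDerivAt_HcOp hΩ hV hT hT0 hslab hA hp.1).differentiableAt.differentiableWithinAt
    · intro h
      exact absurd h (by simp)
    · have heq : EqOn (fderiv ℝ (HcOp T A)) (HcOp T (fderiv ℝ A)) (Ω ×ˢ (univ : Set ℝ)) :=
        fun p hp => (hasFDerivAt_HcOp hΩ hV hT hT0 hslab hA hp.1).fderiv
      exact (ih (fderiv ℝ A) (flatOn_fderiv hΩ hV hT hT0 hslab hA)).congr heq

lemma contDiffOn_HcOp (hΩ : IsOpen Ω) (hV : IsOpen V) (hT : ContDiffOn ℝ ∞ T Ω)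
    (hT0 : ∀ x ∈ Ω, 0 ≤ T x)
    (hslab : ∀ x ∈ Ω, ∀ t : ℝ, 0 ≤ t → t ≤ T x → (x, t) ∈ V)
    {F : Type (max u v)} [NormedAddCommGroup F] [NormedSpace ℝ F]
    {A : E × ℝ → F} (hA : FlatOn Ω T V A) :
    ContDiffOn ℝ ∞ (HcOp T A) (Ω ×ˢ (univ : Set ℝ)) := by
  rw [contDiffOn_infty]
  intro n
  exact contDiffOn_HcOp_nat hΩ hV hT hT0 hslab n A hA

end Core

section CLE

variable {F : Type*} [NormedAddCommGroup F] [NormedSpace ℝ F]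
variable {G : Type*} [NormedAddCommGroup G] [NormedSpace ℝ G]

lemma cle_deriv_comp (e : F ≃L[ℝ] G) (f : ℝ → F) :
    deriv (fun t => e (f t)) = fun t => e (deriv f t) := by
  funext t
  by_cases h : DifferentiableAt ℝ f t
  · exact ((e : F →L[ℝ] G).hasFDerivAt.comp_hasDerivAt t h.hasDerivAt).deriv
  · have h2 : ¬ DifferentiableAt ℝ (fun t => e (f t)) t := by
      intro hd
      have h3 := ((e.symm : G →L[ℝ] F).differentiableAt).comp t hd
      simp only [Function.comp_def, ContinuousLinearEquiv.coe_coe,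
        ContinuousLinearEquiv.symm_apply_apply] at h3
      exact h h3
    rw [deriv_zero_of_not_differentiableAt h, deriv_zero_of_not_differentiableAt h2, map_zero]

lemma cle_iter_deriv_comp (e : F ≃L[ℝ] G) :
    ∀ (m : ℕ) (f : ℝ → F), deriv^[m] (fun t => e (f t)) = fun t => e (deriv^[m] f t) := by
  intro m
  induction m with
  | zero => intro f; rfl
  | succ m ih =>
    intro f
    rw [Function.iterate_succ_apply, Function.iterate_succ_apply, cle_deriv_comp e f, ih]

end CLE


/-- Version of `contDiffOn_HcOp` for a codomain in an arbitrary universe. -/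
lemma contDiffOn_HcOp' {E : Type u} [NormedAddCommGroup E] [NormedSpace ℝ E]
    {F : Type v} [NormedAddCommGroup F] [NormedSpace ℝ F]
    {Ω : Set E} {T : E → ℝ} {V : Set (E × ℝ)}
    (hΩ : IsOpen Ω) (hV : IsOpen V) (hT : ContDiffOn ℝ ∞ T Ω)
    (hT0 : ∀ x ∈ Ω, 0 ≤ T x)
    (hslab : ∀ x ∈ Ω, ∀ t : ℝ, 0 ≤ t → t ≤ T x → (x, t) ∈ V)
    {A : E × ℝ → F} (hA : FlatOn Ω T V A) :
    ContDiffOn ℝ ∞ (HcOp T A) (Ω ×ˢ (univ : Set ℝ)) := by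
  let e : ULift.{u} F ≃L[ℝ] F := ContinuousLinearEquiv.ulift
  set A' : E × ℝ → ULift.{u} F := fun q => e.symm (A q) with hA'def
  have hA' : FlatOn Ω T V A' := by
    constructor
    · exact (e.symm : F →L[ℝ] ULift.{u} F).contDiff.comp_contDiffOn hA.smooth
    · intro x hx m hm
      have h1 : (DtOp^[m] A') (x, 0) = e.symm ((DtOp^[m] A) (x, 0)) := by
        rw [dtOp_iter_slice, dtOp_iter_slice]
        have h2 : (fun s => A' (x, s)) = fun s => e.symm (A (x, s)) := rfl
        rw [h2, cle_iter_deriv_comp e.symm m (fun s => A (x, s))]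
      rw [h1, hA.flat0 x hx m hm, map_zero]
    · intro x hx m hm
      have h1 : (DtOp^[m] A') (x, T x) = e.symm ((DtOp^[m] A) (x, T x)) := by
        rw [dtOp_iter_slice, dtOp_iter_slice]
        have h2 : (fun s => A' (x, s)) = fun s => e.symm (A (x, s)) := rfl
        rw [h2, cle_iter_deriv_comp e.symm m (fun s => A (x, s))]
      rw [h1, hA.flatT x hx m hm, map_zero]
  have h := contDiffOn_HcOp hΩ hV hT hT0 hslab hA'
  have hcomp : ContDiffOn ℝ ∞ (fun q => e (HcOp T A' q)) (Ω ×ˢ (univ : Set ℝ)) :=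
    (e : ULift.{u} F →L[ℝ] F).contDiff.comp_contDiffOn h
  refine hcomp.congr fun q hq => ?_
  show HcOp T A q = e (HcOp T A' q)
  simp [HcOp, A', e.apply_symm_apply]

/-- The analytic core of the smoothness of concatenation of smooth
families of Moore paths. -/
theorem smooth_concatenation_of_moore_families
    {E : Type*} [NormedAddCommGroup E] [NormedSpace ℝ E] [FiniteDimensional ℝ E]
    {H : Type*} [TopologicalSpace H] (I : ModelWithCorners ℝ E H) [I.Boundaryless]
    {U : Type*} [TopologicalSpace U] [ChartedSpace H U] [IsManifold I (⊤ : ℕ∞) U]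
    (N : ℕ) (hN : 0 < N)
    (T₀ T₁ : U → ℝ)
    (hT₀ : ContMDiff I 𝓘(ℝ, ℝ) (⊤ : ℕ∞) T₀) (hT₁ : ContMDiff I 𝓘(ℝ, ℝ) (⊤ : ℕ∞) T₁)
    (hT₀0 : ∀ u, 0 ≤ T₀ u) (hT₁0 : ∀ u, 0 ≤ T₁ u)
    (V₀ V₁ : Set (U × ℝ)) (hV₀ : IsOpen V₀) (hV₁ : IsOpen V₁)
    (hUV₀ : {p : U × ℝ | 0 ≤ p.2 ∧ p.2 ≤ T₀ p.1} ⊆ V₀)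
    (hUV₁ : {p : U × ℝ | 0 ≤ p.2 ∧ p.2 ≤ T₁ p.1} ⊆ V₁)
    (F₀ F₁ : U × ℝ → EuclideanSpace ℝ (Fin N))
    (hF₀ : ContMDiffOn (I.prod 𝓘(ℝ, ℝ)) 𝓘(ℝ, EuclideanSpace ℝ (Fin N)) (⊤ : ℕ∞) F₀ V₀)
    (hF₁ : ContMDiffOn (I.prod 𝓘(ℝ, ℝ)) 𝓘(ℝ, EuclideanSpace ℝ (Fin N)) (⊤ : ℕ∞) F₁ V₁)
    (hder₀ : ∀ (u : U) (m : ℕ), 1 ≤ m →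
      iteratedDeriv m (fun t => F₀ (u, t)) 0 = 0 ∧
      iteratedDeriv m (fun t => F₀ (u, t)) (T₀ u) = 0)
    (hder₁ : ∀ (u : U) (m : ℕ), 1 ≤ m →
      iteratedDeriv m (fun t => F₁ (u, t)) 0 = 0 ∧
      iteratedDeriv m (fun t => F₁ (u, t)) (T₁ u) = 0)
    (hmatch : ∀ u, F₀ (u, T₀ u) = F₁ (u, 0)) :
    ∃ G : U × ℝ → EuclideanSpace ℝ (Fin N),
      ContMDiff (I.prod 𝓘(ℝ, ℝ)) 𝓘(ℝ, EuclideanSpace ℝ (Fin N)) (⊤ : ℕ∞) G ∧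
      ∀ (u : U) (t : ℝ),
        (0 ≤ t → t ≤ T₀ u → G (u, t) = F₀ (u, t)) ∧
        (T₀ u ≤ t → t ≤ T₀ u + T₁ u → G (u, t) = F₁ (u, t - T₀ u)) := by
  classical
  refine ⟨fun p =>
    F₀ (p.1, max 0 (min (T₀ p.1) p.2)) +
    F₁ (p.1, max 0 (min (T₁ p.1) (p.2 - T₀ p.1))) - F₁ (p.1, 0), ?_, ?_⟩
  · -- smoothness
    intro p₀
    obtain ⟨u₀, t₀⟩ := p₀
    have hΩopen : IsOpen (extChartAt I u₀).target := isOpen_extChartAt_target u₀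
    set ψ : E → U := ⇑(extChartAt I u₀).symm with hψ
    set Ω : Set E := (extChartAt I u₀).target with hΩdef
    -- smoothness of the transported time functions
    have hT₀' : ContDiffOn ℝ ∞ (fun x => T₀ (ψ x)) Ω := by
      have h := (contMDiffOn_iff.mp (hT₀.contMDiffOn (s := (univ : Set U)))).2 u₀ (T₀ u₀)
      simp only [extChartAt_model_space_eq_id, PartialEquiv.refl_coe, PartialEquiv.refl_source,
        preimage_univ, univ_inter, inter_univ, Function.comp_def, id_eq] at h
      exact h
    have hT₁' : ContDiffOn ℝ ∞ (fun x => T₁ (ψ x)) Ω := by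
      have h := (contMDiffOn_iff.mp (hT₁.contMDiffOn (s := (univ : Set U)))).2 u₀ (T₁ u₀)
      simp only [extChartAt_model_space_eq_id, PartialEquiv.refl_coe, PartialEquiv.refl_source,
        preimage_univ, univ_inter, inter_univ, Function.comp_def, id_eq] at h
      exact h
    -- the transported maps and domains
    have hA₀ : ContDiffOn ℝ ∞ (fun q : E × ℝ => F₀ (ψ q.1, q.2))
        ((Ω ×ˢ (univ : Set ℝ)) ∩ (fun q : E × ℝ => (ψ q.1, q.2)) ⁻¹' V₀) := by
      have h := (contMDiffOn_iff.mp hF₀).2 (u₀, (0 : ℝ)) (F₀ (u₀, 0))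
      simp only [extChartAt_prod, extChartAt_model_space_eq_id, PartialEquiv.prod_symm,
        PartialEquiv.refl_symm, PartialEquiv.prod_coe, PartialEquiv.refl_coe,
        PartialEquiv.prod_target, PartialEquiv.refl_target, PartialEquiv.refl_source,
        preimage_univ, inter_univ, univ_inter, Function.comp_def, id_eq] at h
      exact h
    have hA₁ : ContDiffOn ℝ ∞ (fun q : E × ℝ => F₁ (ψ q.1, q.2))
        ((Ω ×ˢ (univ : Set ℝ)) ∩ (fun q : E × ℝ => (ψ q.1, q.2)) ⁻¹' V₁) := by
      have h := (contMDiffOn_iff.mp hF₁).2 (u₀, (0 : ℝ)) (F₁ (u₀, 0))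
      simp only [extChartAt_prod, extChartAt_model_space_eq_id, PartialEquiv.prod_symm,
        PartialEquiv.refl_symm, PartialEquiv.prod_coe, PartialEquiv.refl_coe,
        PartialEquiv.prod_target, PartialEquiv.refl_target, PartialEquiv.refl_source,
        preimage_univ, inter_univ, univ_inter, Function.comp_def, id_eq] at h
      exact h
    have hΨcont : ContinuousOn (fun q : E × ℝ => (ψ q.1, q.2)) (Ω ×ˢ (univ : Set ℝ)) :=
      ((continuousOn_extChartAt_symm u₀).comp continuousOn_fst fun q hq => hq.1).prodMk
        continuousOn_snd
    have hV₀' : IsOpen ((Ω ×ˢ (univ : Set ℝ)) ∩ (fun q : E × ℝ => (ψ q.1, q.2)) ⁻¹' V₀) :=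
      hΨcont.isOpen_inter_preimage (hΩopen.prod isOpen_univ) hV₀
    have hV₁' : IsOpen ((Ω ×ˢ (univ : Set ℝ)) ∩ (fun q : E × ℝ => (ψ q.1, q.2)) ⁻¹' V₁) :=
      hΨcont.isOpen_inter_preimage (hΩopen.prod isOpen_univ) hV₁
    have hslab₀ : ∀ x ∈ Ω, ∀ t : ℝ, 0 ≤ t → t ≤ T₀ (ψ x) →
        (x, t) ∈ (Ω ×ˢ (univ : Set ℝ)) ∩ (fun q : E × ℝ => (ψ q.1, q.2)) ⁻¹' V₀ :=
      fun x hx t h1 h2 => ⟨⟨hx, mem_univ _⟩, hUV₀ ⟨h1, h2⟩⟩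
    have hslab₁ : ∀ x ∈ Ω, ∀ t : ℝ, 0 ≤ t → t ≤ T₁ (ψ x) →
        (x, t) ∈ (Ω ×ˢ (univ : Set ℝ)) ∩ (fun q : E × ℝ => (ψ q.1, q.2)) ⁻¹' V₁ :=
      fun x hx t h1 h2 => ⟨⟨hx, mem_univ _⟩, hUV₁ ⟨h1, h2⟩⟩
    have hT₀0' : ∀ x ∈ Ω, 0 ≤ T₀ (ψ x) := fun x _ => hT₀0 (ψ x)
    have hT₁0' : ∀ x ∈ Ω, 0 ≤ T₁ (ψ x) := fun x _ => hT₁0 (ψ x)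
    -- flatness
    have hFlat₀ : FlatOn Ω (fun x => T₀ (ψ x))
        ((Ω ×ˢ (univ : Set ℝ)) ∩ (fun q : E × ℝ => (ψ q.1, q.2)) ⁻¹' V₀)
        (fun q : E × ℝ => F₀ (ψ q.1, q.2)) := by
      refine ⟨hA₀, ?_, ?_⟩
      · intro x hx m hm
        rw [dtOp_iter_slice]
        have h1 : (fun s => F₀ (ψ x, s)) = fun s : ℝ => F₀ (ψ x, s) := rfl
        rw [← iteratedDeriv_eq_iterate]
        exact (hder₀ (ψ x) m hm).1
      · intro x hx m hm
        rw [dtOp_iter_slice, ← iteratedDeriv_eq_iterate]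
        exact (hder₀ (ψ x) m hm).2
    have hFlat₁ : FlatOn Ω (fun x => T₁ (ψ x))
        ((Ω ×ˢ (univ : Set ℝ)) ∩ (fun q : E × ℝ => (ψ q.1, q.2)) ⁻¹' V₁)
        (fun q : E × ℝ => F₁ (ψ q.1, q.2)) := by
      refine ⟨hA₁, ?_, ?_⟩
      · intro x hx m hm
        rw [dtOp_iter_slice, ← iteratedDeriv_eq_iterate]
        exact (hder₁ (ψ x) m hm).1
      · intro x hx m hm
        rw [dtOp_iter_slice, ← iteratedDeriv_eq_iterate]
        exact (hder₁ (ψ x) m hm).2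
    -- the chart-level function
    have hH₀ : ContDiffOn ℝ ∞ (HcOp (fun x => T₀ (ψ x)) (fun q : E × ℝ => F₀ (ψ q.1, q.2)))
        (Ω ×ˢ (univ : Set ℝ)) :=
      contDiffOn_HcOp' hΩopen hV₀' hT₀' hT₀0' hslab₀ hFlat₀
    have hH₁ : ContDiffOn ℝ ∞ (HcOp (fun x => T₁ (ψ x)) (fun q : E × ℝ => F₁ (ψ q.1, q.2)))
        (Ω ×ˢ (univ : Set ℝ)) :=
      contDiffOn_HcOp' hΩopen hV₁' hT₁' hT₁0' hslab₁ hFlat₁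
    set chartG : E × ℝ → EuclideanSpace ℝ (Fin N) := fun q =>
      HcOp (fun x => T₀ (ψ x)) (fun q : E × ℝ => F₀ (ψ q.1, q.2)) q +
      HcOp (fun x => T₁ (ψ x)) (fun q : E × ℝ => F₁ (ψ q.1, q.2)) (q.1, q.2 - T₀ (ψ q.1)) -
      F₁ (ψ q.1, 0) with hchartGdef
    have hchartG : ContDiffOn ℝ ∞ chartG (Ω ×ˢ (univ : Set ℝ)) := by
      have hσ : ContDiffOn ℝ ∞ (fun q : E × ℝ => (q.1, q.2 - T₀ (ψ q.1)))
          (Ω ×ˢ (univ : Set ℝ)) := by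
        refine (contDiff_fst.contDiffOn).prodMk ?_
        exact (contDiff_snd.contDiffOn).sub (hT₀'.comp contDiff_fst.contDiffOn fun q hq => hq.1)
      have h2 : ContDiffOn ℝ ∞ (fun q : E × ℝ =>
          HcOp (fun x => T₁ (ψ x)) (fun q : E × ℝ => F₁ (ψ q.1, q.2)) (q.1, q.2 - T₀ (ψ q.1)))
          (Ω ×ˢ (univ : Set ℝ)) :=
        hH₁.comp hσ fun q hq => ⟨hq.1, mem_univ _⟩
      have h3 : ContDiffOn ℝ ∞ (fun q : E × ℝ => F₁ (ψ q.1, (0 : ℝ)))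
          (Ω ×ˢ (univ : Set ℝ)) := by
        refine hA₁.comp ((contDiff_fst.contDiffOn).prodMk contDiffOn_const) fun q hq => ?_
        exact hslab₁ q.1 hq.1 0 le_rfl (hT₁0 (ψ q.1))
      exact (hH₀.add h2).sub h3
    -- the identity between `chartG` and the global function, read through the chart
    have hkey : ∀ q : E × ℝ,
        chartG q = F₀ (ψ q.1, max 0 (min (T₀ (ψ q.1)) q.2)) +
          F₁ (ψ q.1, max 0 (min (T₁ (ψ q.1)) (q.2 - T₀ (ψ q.1)))) - F₁ (ψ q.1, 0) :=
      fun q => rfl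
    rw [contMDiffAt_iff]
    constructor
    · -- continuity
      have hev : (fun p : U × ℝ => chartG (extChartAt I u₀ p.1, p.2)) =ᶠ[𝓝 (u₀, t₀)]
          (fun p : U × ℝ => F₀ (p.1, max 0 (min (T₀ p.1) p.2)) +
            F₁ (p.1, max 0 (min (T₁ p.1) (p.2 - T₀ p.1))) - F₁ (p.1, 0)) := by
        have hsrc : (extChartAt I u₀).source ×ˢ (univ : Set ℝ) ∈ 𝓝 ((u₀ : U), t₀) :=
          prod_mem_nhds (extChartAt_source_mem_nhds u₀) Filter.univ_mem
        filter_upwards [hsrc] with p hp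
        have hinv : ψ (extChartAt I u₀ p.1) = p.1 := (extChartAt I u₀).left_inv hp.1
        rw [hkey]
        simp only [hinv]
      have h1 : ContinuousAt (fun p : U × ℝ => ((extChartAt I u₀ p.1 : E), p.2)) (u₀, t₀) := by
        refine ContinuousAt.prodMk ?_ continuousAt_snd
        exact ContinuousAt.comp (x := ((u₀ : U), t₀)) (f := Prod.fst)
          (continuousAt_extChartAt u₀) continuousAt_fst
      have h2 : ContinuousAt chartG (extChartAt I u₀ u₀, t₀) :=
        hchartG.continuousOn.continuousAt
          ((hΩopen.prod isOpen_univ).mem_nhds ⟨mem_extChartAt_target u₀, mem_univ _⟩)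
      have h3 := ContinuousAt.comp (g := chartG)
        (f := fun p : U × ℝ => ((extChartAt I u₀ p.1 : E), p.2)) (x := ((u₀ : U), t₀)) h2 h1
      exact h3.congr_of_eventuallyEq hev.symm
    · -- smoothness in the chart
      have hfun : ∀ q : E × ℝ,
          (extChartAt 𝓘(ℝ, EuclideanSpace ℝ (Fin N))
            ((fun p : U × ℝ => F₀ (p.1, max 0 (min (T₀ p.1) p.2)) +
              F₁ (p.1, max 0 (min (T₁ p.1) (p.2 - T₀ p.1))) - F₁ (p.1, 0)) (u₀, t₀)) ∘
            (fun p : U × ℝ => F₀ (p.1, max 0 (min (T₀ p.1) p.2)) +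
              F₁ (p.1, max 0 (min (T₁ p.1) (p.2 - T₀ p.1))) - F₁ (p.1, 0)) ∘
            (extChartAt (I.prod 𝓘(ℝ, ℝ)) ((u₀ : U), t₀)).symm) q = chartG q := by
        intro q
        simp only [extChartAt_prod, extChartAt_model_space_eq_id, PartialEquiv.prod_symm,
          PartialEquiv.refl_symm, PartialEquiv.prod_coe, PartialEquiv.refl_coe,
          Function.comp_def, id_eq]
        exact (hkey q).symm
      rw [funext hfun, (I.prod 𝓘(ℝ, ℝ)).range_eq_univ]
      have hpt : (extChartAt (I.prod 𝓘(ℝ, ℝ)) ((u₀ : U), t₀)) (u₀, t₀)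
          = (extChartAt I u₀ u₀, t₀) := by
        simp [extChartAt_prod, chartAt_self_eq]
      rw [hpt]
      refine (hchartG.contDiffAt ?_).contDiffWithinAt
      exact (hΩopen.prod isOpen_univ).mem_nhds ⟨mem_extChartAt_target u₀, mem_univ _⟩
  · -- the two required identities
    intro u t
    constructor
    · intro h0 h1
      have e1 : max 0 (min (T₀ u) t) = t := by
        rw [min_eq_right h1, max_eq_right h0]
      have e2 : max 0 (min (T₁ u) (t - T₀ u)) = 0 :=
        max_eq_left (le_trans (min_le_right _ _) (by linarith))
      dsimp only
      rw [e1, e2]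
      exact add_sub_cancel_right _ _
    · intro h0 h1
      have e1 : max 0 (min (T₀ u) t) = T₀ u := by
        rw [min_eq_left h0, max_eq_right (hT₀0 u)]
      have e2 : max 0 (min (T₁ u) (t - T₀ u)) = t - T₀ u := by
        rw [min_eq_right (by linarith), max_eq_right (by linarith)]
      dsimp only
      rw [e1, e2, hmatch u]
      exact add_sub_cancel_left _ _
end

section
/- Let (Γ, c₀, c₁, …, c_r, t) be a decorated cactus. Define its dual graph T as follows: the vertex set of T is the disjoint union {c₁, …, c_r} ⊔ V_Γ; each flag f ∈ c_i (1 ≤ i ≤ r) gives an edge of T connecting the vertex c_i and the vertex λ_Γ(f) (formally, the flag set of T is (c₁ ∪ ⋯ ∪ c_r) × {0,1}, the involution swaps (f,0) and (f,1), and λ_T(f,0) = c_i for f ∈ c_i while λ_T(f,1) = λ_Γ(f)). Then T is a tree. -/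
open scoped Classical

/-- A *decorated cactus* (Definition 8.1 of the paper): a connected ribbon graph `Γ`
of genus `0`, together with cycles `c 0, c 1, …, c r` (orbits of `rot ∘ inv` on the
set of flags) whose disjoint union is the set of flags, such that every pair
`{f, inv f}` meets `c 0` in exactly one flag, and a distinguished tail `tail`.

* `V` is the (finite) set of vertices, `F` the (finite) set of flags;
* `lam : F → V` assigns to a flag its vertex, `inv` is the involution `ι`
  (whose non-fixed orbits are the edges, and whose fixed points are the tails);
* `rot : F ≃ F` is the ribbon structure `N`, preserving `lam` and acting
  transitively on every fiber of `lam`;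
* connectivity is phrased via walks of edges, and genus `0` via
  `#V + #cycles = #edges + 2` (i.e. `2 - 2g = #V - #E + #cycles` with `g = 0`). -/
structure DecoratedCactus (r : ℕ) : Type 1 where
  V : Type
  F : Type
  [finV : Fintype V]
  [finF : Fintype F]
  [decV : DecidableEq V]
  [decF : DecidableEq F]
  lam : F → V
  inv : F → F
  inv_invol : ∀ f, inv (inv f) = f
  rot : F ≃ F
  lam_rot : ∀ f, lam (rot f) = lam f
  rot_trans : ∀ f g : F, lam f = lam g → ∃ n : ℕ, (fun x => rot x)^[n] f = g
  conn : Nonempty V ∧ ∀ v w : V,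
    Relation.ReflTransGen (fun a b => ∃ f, inv f ≠ f ∧ lam f = a ∧ lam (inv f) = b) v w
  genus_zero :
    Fintype.card V +
      (Finset.univ.image (fun f : F =>
        Finset.univ.filter (fun g : F => ∃ n : ℕ, (fun x => rot (inv x))^[n] f = g))).card =
    ((Finset.univ.filter (fun f : F => inv f ≠ f)).image (fun f => s(f, inv f))).card + 2
  c : Fin (r + 1) → Set F
  c_cycle : ∀ i, ∃ f : F, c i = {g | ∃ n : ℕ, (fun x => rot (inv x))^[n] f = g}
  c_disj : ∀ i j, i ≠ j → c i ∩ c j = ∅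
  c_cover : (⋃ i, c i) = (Set.univ : Set F)
  flag_c0 : ∀ f : F, ({f, inv f} ∩ c 0 : Set F).encard = 1
  tail : F
  tail_tail : inv tail = tail

attribute [instance] DecoratedCactus.finV DecoratedCactus.finF
  DecoratedCactus.decV DecoratedCactus.decF

namespace DecoratedCactus

variable {r : ℕ}

/-- Vertices of the dual graph: the cycles `c 1, …, c r` together with the vertices. -/
abbrev DualV (d : DecoratedCactus r) : Type := {i : Fin (r + 1) // i ≠ 0} ⊕ d.V

/-- Flags of non-zeroth cycles. -/
abbrev CFlag (d : DecoratedCactus r) : Type :=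
  {f : d.F // ∃ i : Fin (r + 1), i ≠ 0 ∧ f ∈ d.c i}

/-- Flags of the dual graph: every flag `f` of `c 1 ∪ ⋯ ∪ c r` gives an edge of the
dual graph, i.e. a pair of dual flags `(f, false)` and `(f, true)`. -/
abbrev DualF (d : DecoratedCactus r) : Type := CFlag d × Bool

/-- `λ_T`: the flag `(f, false)` is attached to the cycle `c i` containing `f`,
the flag `(f, true)` to the vertex `λ_Γ f`. -/
noncomputable def dualLam (d : DecoratedCactus r) : DualF d → DualV d := fun φ =>
  if φ.2 then Sum.inr (d.lam φ.1.1)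
  else Sum.inl ⟨Classical.choose φ.1.2, (Classical.choose_spec φ.1.2).1⟩

/-- `ι_T`: swaps the two flags `(f, false)` and `(f, true)` of an edge. -/
def dualInv (d : DecoratedCactus r) : DualF d → DualF d := fun φ => (φ.1, !φ.2)

/-! ### Auxiliary lemmas -/

/-- The permutation `rot ∘ inv` of the flags, whose orbits are the cycles. -/
noncomputable def perm (d : DecoratedCactus r) : Equiv.Perm d.F :=
  (Equiv.mk d.inv d.inv d.inv_invol d.inv_invol).trans d.rot

lemma iter_eq (d : DecoratedCactus r) (n : ℕ) (f : d.F) :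
    (fun x => d.rot (d.inv x))^[n] f = (d.perm ^ n) f := by
  rw [Equiv.Perm.coe_pow]; rfl

lemma orbit_symm (d : DecoratedCactus r) {f g : d.F}
    (h : ∃ n, (fun x => d.rot (d.inv x))^[n] f = g) :
    ∃ n, (fun x => d.rot (d.inv x))^[n] g = f := by
  obtain ⟨n, hn⟩ := h
  have h1 : 0 < orderOf d.perm := orderOf_pos _
  refine ⟨orderOf d.perm * n - n, ?_⟩
  rw [d.iter_eq] at hn ⊢
  have key : (d.perm ^ (orderOf d.perm * n - n)) ((d.perm ^ n) f)
      = (d.perm ^ (orderOf d.perm * n)) f := by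
    rw [← Equiv.Perm.mul_apply, ← pow_add,
      Nat.sub_add_cancel (Nat.le_mul_of_pos_left n h1)]
  rw [hn] at key
  rw [key, pow_mul, pow_orderOf_eq_one, one_pow, Equiv.Perm.one_apply]

lemma exists_mem_c (d : DecoratedCactus r) (f : d.F) : ∃ i, f ∈ d.c i := by
  have : f ∈ ⋃ i, d.c i := d.c_cover.symm ▸ Set.mem_univ f
  exact Set.mem_iUnion.mp this

lemma c_uniq (d : DecoratedCactus r) {i j : Fin (r + 1)} {f : d.F}
    (hi : f ∈ d.c i) (hj : f ∈ d.c j) : i = j := by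
  by_contra h
  have h2 : f ∈ d.c i ∩ d.c j := ⟨hi, hj⟩
  rw [d.c_disj i j h] at h2
  exact h2

lemma c_eq_orbit (d : DecoratedCactus r) {i : Fin (r + 1)} {f : d.F} (hf : f ∈ d.c i) :
    d.c i = {g | ∃ n, (fun x => d.rot (d.inv x))^[n] f = g} := by
  obtain ⟨f0, h0⟩ := d.c_cycle i
  have hf0 : ∃ n, (fun x => d.rot (d.inv x))^[n] f0 = f := by rw [h0] at hf; exact hf
  obtain ⟨m, hm⟩ := hf0
  ext g
  simp only [h0, Set.mem_setOf_eq]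
  constructor
  · rintro ⟨n, hn⟩
    obtain ⟨k, hk⟩ := d.orbit_symm ⟨m, hm⟩
    exact ⟨n + k, by rw [Function.iterate_add_apply, hk, hn]⟩
  · rintro ⟨n, hn⟩
    exact ⟨n + m, by rw [Function.iterate_add_apply, hm, hn]⟩

lemma step_mem (d : DecoratedCactus r) {i : Fin (r + 1)} {f : d.F} (hf : f ∈ d.c i) :
    d.rot (d.inv f) ∈ d.c i := by
  rw [d.c_eq_orbit hf]
  exact ⟨1, rfl⟩

lemma tail_mem_c0 (d : DecoratedCactus r) (f : d.F) (h : d.inv f = f) : f ∈ d.c 0 := by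
  by_contra hf
  have h1 := d.flag_c0 f
  have h2 : ({f, d.inv f} ∩ d.c 0 : Set d.F) = ∅ := by
    ext x
    simp only [Set.mem_inter_iff, Set.mem_insert_iff, Set.mem_singleton_iff,
      Set.mem_empty_iff_false, iff_false, not_and]
    rintro (rfl | rfl)
    · exact hf
    · rw [h]; exact hf
  rw [h2] at h1
  simp at h1

lemma c0_iff (d : DecoratedCactus r) (f : d.F) (h : d.inv f ≠ f) :
    f ∈ d.c 0 ↔ d.inv f ∉ d.c 0 := by
  have h1 := d.flag_c0 f
  rw [Set.encard_eq_one] at h1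
  obtain ⟨a, ha⟩ := h1
  have haf : a ∈ ({f, d.inv f} : Set d.F) ∧ a ∈ d.c 0 := by
    have : a ∈ ({f, d.inv f} ∩ d.c 0 : Set d.F) := by rw [ha]; rfl
    exact this
  constructor
  · intro hf hif
    have h2 : f ∈ ({a} : Set d.F) := by rw [← ha]; exact ⟨by simp, hf⟩
    have h3 : d.inv f ∈ ({a} : Set d.F) := by rw [← ha]; exact ⟨by simp, hif⟩
    exact h (h3.trans h2.symm)
  · intro hif
    rcases haf.1 with h2 | h2
    · exact h2 ▸ haf.2
    · exact absurd (h2 ▸ haf.2) hif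

lemma noTail (d : DecoratedCactus r) : ∀ φ : DualF d, dualInv d φ ≠ φ := by
  rintro ⟨f, b⟩ h
  have := congrArg Prod.snd h
  simp [dualInv] at this

lemma dualInv_dualInv (d : DecoratedCactus r) (φ : DualF d) :
    dualInv d (dualInv d φ) = φ := by
  obtain ⟨f, b⟩ := φ
  simp [dualInv]

lemma dualLam_true (d : DecoratedCactus r) (f : CFlag d) :
    dualLam d (f, true) = Sum.inr (d.lam f.1) := by
  simp [dualLam]

lemma dualLam_false (d : DecoratedCactus r) {i : Fin (r + 1)} (hi : i ≠ 0)
    (f : CFlag d) (hf : f.1 ∈ d.c i) :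
    dualLam d (f, false) = Sum.inl ⟨i, hi⟩ := by
  have hs := (Classical.choose_spec f.2).2
  simp only [dualLam, Bool.false_eq_true, if_false]
  exact congrArg Sum.inl (Subtype.ext (d.c_uniq hs hf))

/-- The edge relation of the dual graph. -/
def Rel (d : DecoratedCactus r) : DualV d → DualV d → Prop := fun a b =>
  ∃ φ : DualF d, dualInv d φ ≠ φ ∧ dualLam d φ = a ∧ dualLam d (dualInv d φ) = b

lemma rel_symm (d : DecoratedCactus r) {a b : DualV d} (h : Rel d a b) : Rel d b a := by
  obtain ⟨φ, h1, h2, h3⟩ := h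
  refine ⟨dualInv d φ, ?_, h3, ?_⟩
  · rw [d.dualInv_dualInv]; exact fun hh => h1 hh.symm
  · rw [d.dualInv_dualInv]; exact h2

lemma rel_cycle (d : DecoratedCactus r) {i : Fin (r + 1)} (hi : i ≠ 0)
    (f : CFlag d) (hf : f.1 ∈ d.c i) :
    Rel d (Sum.inl ⟨i, hi⟩) (Sum.inr (d.lam f.1)) := by
  refine ⟨(f, false), d.noTail _, d.dualLam_false hi f hf, ?_⟩
  show dualLam d (f, true) = _
  rw [d.dualLam_true]

lemma step (d : DecoratedCactus r) {a b : d.V}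
    (h : ∃ f, d.inv f ≠ f ∧ d.lam f = a ∧ d.lam (d.inv f) = b) :
    Relation.ReflTransGen (Rel d) (Sum.inr a) (Sum.inr b) := by
  obtain ⟨f, hne, ha, hb⟩ := h
  by_cases hc : f ∈ d.c 0
  · have hif : d.inv f ∉ d.c 0 := (d.c0_iff f hne).mp hc
    obtain ⟨i, hi⟩ := d.exists_mem_c (d.inv f)
    have hi0 : i ≠ 0 := by rintro rfl; exact hif hi
    have hrf : d.rot f ∈ d.c i := by
      have := d.step_mem hi
      rwa [d.inv_invol] at this
    have e1 : Rel d (Sum.inl ⟨i, hi0⟩) (Sum.inr a) := by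
      have := d.rel_cycle hi0 ⟨d.rot f, ⟨i, hi0, hrf⟩⟩ hrf
      rwa [show d.lam (d.rot f) = a from (d.lam_rot f).trans ha] at this
    have e2 : Rel d (Sum.inl ⟨i, hi0⟩) (Sum.inr b) := by
      have := d.rel_cycle hi0 ⟨d.inv f, ⟨i, hi0, hi⟩⟩ hi
      rwa [hb] at this
    exact .trans (.single (d.rel_symm e1)) (.single e2)
  · obtain ⟨i, hi⟩ := d.exists_mem_c f
    have hi0 : i ≠ 0 := by rintro rfl; exact hc hi
    have hrf : d.rot (d.inv f) ∈ d.c i := d.step_mem hi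
    have e1 : Rel d (Sum.inl ⟨i, hi0⟩) (Sum.inr a) := by
      have := d.rel_cycle hi0 ⟨f, ⟨i, hi0, hi⟩⟩ hi
      rwa [ha] at this
    have e2 : Rel d (Sum.inl ⟨i, hi0⟩) (Sum.inr b) := by
      have := d.rel_cycle hi0 ⟨d.rot (d.inv f), ⟨i, hi0, hrf⟩⟩ hrf
      rwa [show d.lam (d.rot (d.inv f)) = b from (d.lam_rot _).trans hb] at this
    exact .trans (.single (d.rel_symm e1)) (.single e2)

lemma conn_inr (d : DecoratedCactus r) (a b : d.V) :
    Relation.ReflTransGen (Rel d) (Sum.inr a) (Sum.inr b) := by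
  have h := d.conn.2 a b
  induction h with
  | refl => exact .refl
  | tail _ h2 ih => exact ih.trans (d.step h2)

lemma cycle_nonempty (d : DecoratedCactus r) (i : Fin (r + 1)) : ∃ f, f ∈ d.c i := by
  obtain ⟨f0, h0⟩ := d.c_cycle i
  exact ⟨f0, by rw [h0]; exact ⟨0, rfl⟩⟩

lemma conn_all (d : DecoratedCactus r) (v w : DualV d) :
    Relation.ReflTransGen (Rel d) v w := by
  have hsym : Symmetric (Relation.ReflTransGen (Rel d)) :=
    (@Relation.ReflTransGen.stdSymm _ _ ⟨fun _ _ h => d.rel_symm h⟩).symm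
  have key : ∀ (i : Fin (r + 1)) (hi : i ≠ 0),
      ∃ a : d.V, Relation.ReflTransGen (Rel d) (Sum.inl ⟨i, hi⟩) (Sum.inr a) := by
    intro i hi
    obtain ⟨f, hf⟩ := d.cycle_nonempty i
    exact ⟨d.lam f, .single (d.rel_cycle hi ⟨f, ⟨i, hi, hf⟩⟩ hf)⟩
  obtain (⟨i, hi⟩ | a) := v <;> obtain (⟨j, hj⟩ | b) := w
  · obtain ⟨a, ha⟩ := key i hi
    obtain ⟨b, hb⟩ := key j hj
    exact (ha.trans (d.conn_inr a b)).trans (hsym hb)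
  · obtain ⟨a, ha⟩ := key i hi
    exact ha.trans (d.conn_inr a b)
  · obtain ⟨b, hb⟩ := key j hj
    exact (d.conn_inr a b).trans (hsym hb)
  · exact d.conn_inr a b

lemma card_dualV (d : DecoratedCactus r) :
    Fintype.card (DualV d) = r + Fintype.card d.V := by
  rw [Fintype.card_sum]
  congr 1
  rw [Fintype.card_subtype_compl, Fintype.card_subtype_eq, Fintype.card_fin]
  omega

lemma card_cflag (d : DecoratedCactus r) :
    Fintype.card (CFlag d) = (Finset.univ.filter (fun f : d.F => f ∉ d.c 0)).card := by
  rw [← Fintype.card_subtype]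
  refine Fintype.card_congr (Equiv.subtypeEquivRight fun f => ?_)
  constructor
  · rintro ⟨i, hi, hf⟩ h0
    exact hi (d.c_uniq hf h0)
  · intro h0
    obtain ⟨i, hi⟩ := d.exists_mem_c f
    exact ⟨i, fun h => h0 (h ▸ hi), hi⟩

lemma card_dual_edges (d : DecoratedCactus r) :
    ((Finset.univ.filter (fun φ : DualF d => dualInv d φ ≠ φ)).image
        (fun φ => s(φ, dualInv d φ))).card = Fintype.card (CFlag d) := by
  have h1 : Finset.univ.filter (fun φ : DualF d => dualInv d φ ≠ φ) = Finset.univ :=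
    Finset.filter_true_of_mem fun φ _ => d.noTail φ
  have h2 : (fun φ : DualF d => s(φ, dualInv d φ)) =
      (fun f : CFlag d => s((f, false), (f, true))) ∘ Prod.fst := by
    funext φ
    obtain ⟨f, b⟩ := φ
    cases b
    · rfl
    · exact Sym2.eq_swap
  have h3 : Finset.univ.image (Prod.fst : DualF d → CFlag d) = Finset.univ :=
    Finset.image_univ_of_surjective fun f => ⟨(f, false), rfl⟩
  have hinj : Function.Injective (fun f : CFlag d => s((f, false), (f, true))) := by
    intro f g h
    rw [Sym2.eq_iff] at h
    rcases h with ⟨h1, _⟩ | ⟨h1, _⟩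
    · exact (Prod.ext_iff.mp h1).1
    · exact absurd (Prod.ext_iff.mp h1).2 (by simp)
  rw [h1, h2, ← Finset.image_image, h3, Finset.card_image_of_injective _ hinj,
    Finset.card_univ]

lemma card_cycles (d : DecoratedCactus r) :
    (Finset.univ.image (fun f : d.F =>
      Finset.univ.filter (fun g : d.F => ∃ n : ℕ, (fun x => d.rot (d.inv x))^[n] f = g))).card
      = r + 1 := by
  have hinj : Function.Injective
      (fun i : Fin (r + 1) => Finset.univ.filter (fun g : d.F => g ∈ d.c i)) := by
    intro i j h
    obtain ⟨f0, hf0⟩ := d.cycle_nonempty i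
    have : f0 ∈ Finset.univ.filter (fun g : d.F => g ∈ d.c j) := by
      dsimp only at h
      rw [← h]; simp [hf0]
    rw [Finset.mem_filter] at this
    exact d.c_uniq hf0 this.2
  have key : Finset.univ.image (fun f : d.F =>
      Finset.univ.filter (fun g : d.F => ∃ n : ℕ, (fun x => d.rot (d.inv x))^[n] f = g))
      = Finset.univ.image (fun i : Fin (r + 1) =>
          Finset.univ.filter (fun g : d.F => g ∈ d.c i)) := by
    apply Finset.Subset.antisymm
    · intro S hS
      simp only [Finset.mem_image, Finset.mem_univ, true_and] at hS ⊢
      obtain ⟨f, rfl⟩ := hS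
      obtain ⟨i, hi⟩ := d.exists_mem_c f
      refine ⟨i, Finset.ext fun g => ?_⟩
      simp only [Finset.mem_filter, Finset.mem_univ, true_and]
      have := Set.ext_iff.mp (d.c_eq_orbit hi) g
      simp only [Set.mem_setOf_eq] at this
      exact this
    · intro S hS
      simp only [Finset.mem_image, Finset.mem_univ, true_and] at hS ⊢
      obtain ⟨i, rfl⟩ := hS
      obtain ⟨f0, hf0⟩ := d.cycle_nonempty i
      refine ⟨f0, Finset.ext fun g => ?_⟩
      simp only [Finset.mem_filter, Finset.mem_univ, true_and]
      have := Set.ext_iff.mp (d.c_eq_orbit hf0) g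
      simp only [Set.mem_setOf_eq] at this
      exact this.symm
  rw [key, Finset.card_image_of_injective _ hinj, Finset.card_univ, Fintype.card_fin]

lemma card_edges (d : DecoratedCactus r) :
    ((Finset.univ.filter (fun f : d.F => d.inv f ≠ f)).image (fun f => s(f, d.inv f))).card
      = (Finset.univ.filter (fun f : d.F => f ∉ d.c 0)).card := by
  symm
  apply Finset.card_bij (fun f _ => s(f, d.inv f))
  · intro f hf
    simp only [Finset.mem_filter, Finset.mem_univ, true_and] at hf
    have hne : d.inv f ≠ f := fun h => hf (d.tail_mem_c0 f h)
    exact Finset.mem_image_of_mem _ (by simp [hne])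
  · intro f hf g hg h
    simp only [Finset.mem_filter, Finset.mem_univ, true_and] at hf hg
    rw [Sym2.eq_iff] at h
    rcases h with ⟨h1, _⟩ | ⟨h1, h2⟩
    · exact h1
    · exfalso
      have hne : d.inv g ≠ g := fun h => hg (d.tail_mem_c0 g h)
      have hig : d.inv g ∈ d.c 0 := by
        by_contra h'
        exact hg ((d.c0_iff g hne).mpr h')
      exact hf (h1 ▸ hig)
  · intro x hx
    simp only [Finset.mem_image, Finset.mem_filter, Finset.mem_univ, true_and] at hx
    obtain ⟨f, hne, rfl⟩ := hx
    by_cases hc : f ∈ d.c 0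
    · have hif : d.inv f ∉ d.c 0 := (d.c0_iff f hne).mp hc
      refine ⟨d.inv f, by simp [hif], ?_⟩
      rw [d.inv_invol]
      exact Sym2.eq_swap
    · exact ⟨f, by simp [hc], rfl⟩

/-- Lemma 8.2.  The dual graph of a decorated cactus is a tree:
it is connected, has no tails, and `#V = #E + 1`. -/
theorem dual_graph_is_tree (d : DecoratedCactus r) :
    (Nonempty (DualV d) ∧ ∀ v w : DualV d,
      Relation.ReflTransGen
        (fun a b => ∃ φ : DualF d,
          dualInv d φ ≠ φ ∧ dualLam d φ = a ∧ dualLam d (dualInv d φ) = b) v w) ∧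
    (∀ φ : DualF d, dualInv d φ ≠ φ) ∧
    Fintype.card (DualV d)
      = ((Finset.univ.filter (fun φ : DualF d => dualInv d φ ≠ φ)).image
          (fun φ => s(φ, dualInv d φ))).card + 1 := by
  refine ⟨⟨⟨Sum.inr d.conn.1.some⟩, fun v w => d.conn_all v w⟩, d.noTail, ?_⟩
  rw [d.card_dual_edges, d.card_cflag, d.card_dualV]
  have hg := d.genus_zero
  rw [d.card_cycles, d.card_edges] at hg
  omega

end DecoratedCactus
end
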